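/- arXiv:1401.5551 — 5 statements merged into one kernel-verified Lean document; each statement's English description precedes it below -/
import Mathlib

section
/- Let Ω be a standard Borel space with probability measure μ and let X₁, X₂, X₃ : Ω → ℝ be measurable random variables such that X₁ and X₃ are conditionally independent given the σ-algebra generated by X₂. Then the conditional distribution of X₃ given the pair (X₁, X₂) agrees almost surely with the conditional distribution of X₃ given X₂ alone: for μ-almost every ω, condDistrib X₃ (fun ω => (X₁ ω, X₂ ω)) μ evaluated at (X₁ ω, X₂ ω) equals condDistrib X₃ X₂ μ evaluated at X₂ ω (as measures on ℝ). -/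
open MeasureTheory ProbabilityTheory

open MeasureTheory ProbabilityTheory Set
open scoped ENNReal

lemma key_rect
    {Ω : Type*} [mΩ : MeasurableSpace Ω] [StandardBorelSpace Ω] [Nonempty Ω]
    (μ : Measure Ω) [IsProbabilityMeasure μ]
    (X₁ X₂ X₃ : Ω → ℝ) (h1 : Measurable X₁) (h2 : Measurable X₂) (h3 : Measurable X₃)
    (hm' : MeasurableSpace.comap X₂ (borel ℝ) ≤ mΩ)
    (hci : CondIndepFun (MeasurableSpace.comap X₂ (borel ℝ)) hm' X₁ X₃ μ)
    {A B S : Set ℝ} (hA : MeasurableSet A) (hB : MeasurableSet B) (hS : MeasurableSet S) :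
    μ (X₁ ⁻¹' A ∩ X₂ ⁻¹' B ∩ X₃ ⁻¹' S)
      = ∫⁻ ω in X₁ ⁻¹' A ∩ X₂ ⁻¹' B, condDistrib X₃ X₂ μ (X₂ ω) S ∂μ := by
  set A' := X₁ ⁻¹' A with hA'def
  set B' := X₂ ⁻¹' B with hB'def
  set S' := X₃ ⁻¹' S with hS'def
  have hA' : MeasurableSet A' := h1 hA
  have hB' : MeasurableSet B' := h2 hB
  have hS' : MeasurableSet S' := h3 hS
  have hmB : MeasurableSet[MeasurableSpace.comap X₂ (borel ℝ)] B' := ⟨B, hB, rfl⟩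
  set g : Ω → ℝ := fun ω => (condDistrib X₃ X₂ μ (X₂ ω) S).toReal with hg_def
  have hg_measE : Measurable[MeasurableSpace.comap X₂ (borel ℝ)]
      (fun ω => condDistrib X₃ X₂ μ (X₂ ω) S) := measurable_condDistrib hS
  have hg_sm : StronglyMeasurable[MeasurableSpace.comap X₂ (borel ℝ)] g :=
    (Measurable.ennreal_toReal hg_measE).stronglyMeasurable
  have hg_eq : g =ᵐ[μ] μ⟦S' | MeasurableSpace.comap X₂ (borel ℝ)⟧ :=
    condDistrib_ae_eq_condExp h2 h3 hS
  have hg_le : ∀ ω, ‖g ω‖ ≤ 1 := by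
    intro ω
    rw [Real.norm_eq_abs, abs_of_nonneg ENNReal.toReal_nonneg]
    calc (condDistrib X₃ X₂ μ (X₂ ω) S).toReal ≤ (1 : ℝ≥0∞).toReal :=
          ENNReal.toReal_mono ENNReal.one_ne_top prob_le_one
      _ = 1 := by simp
  have hind_int : ∀ {E : Set Ω}, MeasurableSet E →
      Integrable (E.indicator (fun _ => (1:ℝ))) μ :=
    fun hE => (integrable_const 1).indicator hE
  have hg_int : Integrable g μ := integrable_toReal_condDistrib h2.aemeasurable hS
  have hgmul_int : Integrable (g * A'.indicator (fun _ => (1:ℝ))) μ := by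
    exact (hind_int hA').bdd_mul (hg_sm.mono hm').aestronglyMeasurable (Filter.Eventually.of_forall hg_le)
  have hsets : A' ∩ B' ∩ S' = B' ∩ (A' ∩ S') := by
    ext x; simp only [Set.mem_inter_iff]; tauto
  have hL : (μ (A' ∩ B' ∩ S')).toReal
      = ∫ ω in B', ((A' ∩ S').indicator (fun _ => (1:ℝ))) ω ∂μ := by
    rw [setIntegral_indicator (hA'.inter hS'), hsets]
    simp
    rfl
  have hci' := (condIndepFun_iff_condExp_inter_preimage_eq_mul h1 h3).mp hci A S hA hS
  have hstep1 : ∫ ω in B', ((A' ∩ S').indicator (fun _ => (1:ℝ))) ω ∂μ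
      = ∫ ω in B', (μ⟦A' ∩ S' | MeasurableSpace.comap X₂ (borel ℝ)⟧) ω ∂μ :=
    (setIntegral_condExp hm' (hind_int (hA'.inter hS')) hmB).symm
  have hstep2 : ∫ ω in B', (μ⟦A' ∩ S' | MeasurableSpace.comap X₂ (borel ℝ)⟧) ω ∂μ
      = ∫ ω in B', ((μ⟦A' | MeasurableSpace.comap X₂ (borel ℝ)⟧) ω
          * (μ⟦S' | MeasurableSpace.comap X₂ (borel ℝ)⟧) ω) ∂μ :=
    setIntegral_congr_ae hB' (hci'.mono fun ω hω _ => hω)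
  have hR : (∫⁻ ω in A' ∩ B', condDistrib X₃ X₂ μ (X₂ ω) S ∂μ).toReal
      = ∫ ω in A' ∩ B', g ω ∂μ :=
    (integral_toReal ((hg_measE.mono hm' le_rfl).aemeasurable)
      (Filter.Eventually.of_forall fun ω => measure_lt_top _ _)).symm
  have hR2 : ∫ ω in A' ∩ B', g ω ∂μ = ∫ ω in B', A'.indicator g ω ∂μ := by
    rw [setIntegral_indicator hA', Set.inter_comm B' A']
  have hind_eq : ∀ ω, A'.indicator g ω = (g * A'.indicator (fun _ => (1:ℝ))) ω := by
    intro ω; by_cases h : ω ∈ A' <;> simp [h]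
  have hpull := condExp_mul_of_stronglyMeasurable_left hg_sm hgmul_int (hind_int hA')
  have hstep3 : ∫ ω in B', A'.indicator g ω ∂μ
      = ∫ ω in B', ((g * (μ⟦A' | MeasurableSpace.comap X₂ (borel ℝ)⟧)) ω) ∂μ := by
    calc ∫ ω in B', A'.indicator g ω ∂μ
        = ∫ ω in B', (g * A'.indicator (fun _ => (1:ℝ))) ω ∂μ :=
          setIntegral_congr_ae hB' (Filter.Eventually.of_forall fun ω _ => hind_eq ω)
      _ = ∫ ω in B', (μ[g * A'.indicator (fun _ => (1:ℝ)) | MeasurableSpace.comap X₂ (borel ℝ)]) ω ∂μ :=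
          (setIntegral_condExp hm' hgmul_int hmB).symm
      _ = ∫ ω in B', ((g * (μ⟦A' | MeasurableSpace.comap X₂ (borel ℝ)⟧)) ω) ∂μ :=
          setIntegral_congr_ae hB' (hpull.mono fun ω h _ => h)
  have hstep4 : ∫ ω in B', ((g * (μ⟦A' | MeasurableSpace.comap X₂ (borel ℝ)⟧)) ω) ∂μ
      = ∫ ω in B', ((μ⟦A' | MeasurableSpace.comap X₂ (borel ℝ)⟧) ω
          * (μ⟦S' | MeasurableSpace.comap X₂ (borel ℝ)⟧) ω) ∂μ :=
    setIntegral_congr_ae hB' (hg_eq.mono fun ω h _ => by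
      simp only [Pi.mul_apply, h, mul_comm])
  have hne1 : μ (A' ∩ B' ∩ S') ≠ ⊤ := measure_ne_top _ _
  have hne2 : (∫⁻ ω in A' ∩ B', condDistrib X₃ X₂ μ (X₂ ω) S ∂μ) ≠ ⊤ := by
    refine ne_top_of_le_ne_top (measure_ne_top μ (A' ∩ B')) ?_
    calc ∫⁻ ω in A' ∩ B', condDistrib X₃ X₂ μ (X₂ ω) S ∂μ
        ≤ ∫⁻ _ω in A' ∩ B', 1 ∂μ := lintegral_mono fun ω => prob_le_one
      _ = μ (A' ∩ B') := by simp
  refine (ENNReal.toReal_eq_toReal_iff' hne1 hne2).mp ?_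
  rw [hL, hstep1, hstep2, hR, hR2, hstep3, hstep4]


/-- If `X₁ ⫫ X₃ | X₂` on a standard Borel probability space, then the conditional distribution
of `X₃` given the pair `(X₁, X₂)` agrees almost surely with the conditional distribution of `X₃`
given `X₂` alone. -/
theorem condDistrib_pair_ae_eq_condDistrib_of_condIndepFun
    {Ω : Type*} [mΩ : MeasurableSpace Ω] [StandardBorelSpace Ω] [Nonempty Ω]
    (μ : Measure Ω) [IsProbabilityMeasure μ]
    (X₁ X₂ X₃ : Ω → ℝ) (h1 : Measurable X₁) (h2 : Measurable X₂) (h3 : Measurable X₃)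
    (hm' : MeasurableSpace.comap X₂ (borel ℝ) ≤ mΩ)
    (hci : CondIndepFun (MeasurableSpace.comap X₂ (borel ℝ)) hm' X₁ X₃ μ) :
    ∀ᵐ ω ∂μ,
      condDistrib X₃ (fun ω' => (X₁ ω', X₂ ω')) μ (X₁ ω, X₂ ω) =
        condDistrib X₃ X₂ μ (X₂ ω) := by
  have hpair : Measurable (fun ω => (X₁ ω, X₂ ω)) := h1.prodMk h2
  set ν := μ.map (fun ω => (X₁ ω, X₂ ω)) with hν
  haveI : IsProbabilityMeasure ν := Measure.isProbabilityMeasure_map hpair.aemeasurable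
  set κ : Kernel (ℝ × ℝ) ℝ :=
    Kernel.comap (condDistrib X₃ X₂ μ) Prod.snd measurable_snd with hκ
  have hκapp : ∀ p : ℝ × ℝ, κ p = condDistrib X₃ X₂ μ p.2 :=
    fun p => Kernel.comap_apply _ _ _
  -- the key equality for a fixed `S` on all measurable `t ⊆ ℝ × ℝ`
  have inner : ∀ (S : Set ℝ), MeasurableSet S → ∀ (t : Set (ℝ × ℝ)), MeasurableSet t →
      μ ((fun ω => (X₁ ω, X₂ ω)) ⁻¹' t ∩ X₃ ⁻¹' S)
        = ∫⁻ ω in (fun ω => (X₁ ω, X₂ ω)) ⁻¹' t, condDistrib X₃ X₂ μ (X₂ ω) S ∂μ := by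
    intro S hS
    set m1 := (μ.restrict (X₃ ⁻¹' S)).map (fun ω => (X₁ ω, X₂ ω)) with hm1
    set m2 := ν.withDensity (fun p => condDistrib X₃ X₂ μ p.2 S) with hm2
    have hdens : Measurable (fun p : ℝ × ℝ => condDistrib X₃ X₂ μ p.2 S) :=
      (Kernel.measurable_coe _ hS).comp measurable_snd
    have hm1app : ∀ {t : Set (ℝ × ℝ)}, MeasurableSet t →
        m1 t = μ ((fun ω => (X₁ ω, X₂ ω)) ⁻¹' t ∩ X₃ ⁻¹' S) := by
      intro t ht
      rw [hm1, Measure.map_apply hpair ht, Measure.restrict_apply (hpair ht)]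
    have hm2app : ∀ {t : Set (ℝ × ℝ)}, MeasurableSet t →
        m2 t = ∫⁻ ω in (fun ω => (X₁ ω, X₂ ω)) ⁻¹' t, condDistrib X₃ X₂ μ (X₂ ω) S ∂μ := by
      intro t ht
      rw [hm2, withDensity_apply _ ht, hν, Measure.restrict_map hpair ht,
        lintegral_map hdens hpair]
    have hrect : ∀ {A B : Set ℝ}, MeasurableSet A → MeasurableSet B →
        m1 (A ×ˢ B) = m2 (A ×ˢ B) := by
      intro A B hA hB
      rw [hm1app (hA.prod hB), hm2app (hA.prod hB), Set.mk_preimage_prod]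
      exact key_rect μ X₁ X₂ X₃ h1 h2 h3 hm' hci hA hB hS
    haveI : IsFiniteMeasure m2 := by
      refine isFiniteMeasure_withDensity ?_
      refine ne_top_of_le_ne_top (measure_ne_top ν Set.univ) ?_
      calc ∫⁻ p, condDistrib X₃ X₂ μ p.2 S ∂ν ≤ ∫⁻ _p, 1 ∂ν :=
            lintegral_mono fun p => prob_le_one
        _ = ν Set.univ := lintegral_one
    have hm12 : m1 = m2 := by
      refine MeasureTheory.ext_of_generate_finite _ generateFrom_prod.symm isPiSystem_prod
        ?_ ?_
      · rintro _ ⟨A, hA, B, hB, rfl⟩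
        exact hrect hA hB
      · have := hrect MeasurableSet.univ MeasurableSet.univ
        rwa [Set.univ_prod_univ] at this
    intro t ht
    rw [← hm1app ht, ← hm2app ht, hm12]
  have hcomp : μ.map (fun ω => ((X₁ ω, X₂ ω), X₃ ω)) = ν ⊗ₘ κ := by
    refine MeasureTheory.ext_of_generate_finite _ generateFrom_prod.symm isPiSystem_prod
      ?_ ?_
    · rintro _ ⟨t, ht, S, hS, rfl⟩
      simp only [Set.mem_setOf_eq] at ht hS
      rw [Measure.map_apply (hpair.prodMk h3) (ht.prod hS), Set.mk_preimage_prod,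
        Measure.compProd_apply_prod ht hS]
      have hr : ∫⁻ p in t, κ p S ∂ν
          = ∫⁻ ω in (fun ω => (X₁ ω, X₂ ω)) ⁻¹' t, condDistrib X₃ X₂ μ (X₂ ω) S ∂μ := by
        rw [hν, Measure.restrict_map hpair ht,
          lintegral_map ((Kernel.measurable_coe _ hS)) hpair]
        simp_rw [hκapp]
      rw [hr]
      exact inner S hS t ht
    · haveI : IsMarkovKernel κ := by rw [hκ]; infer_instance
      haveI : IsProbabilityMeasure (μ.map (fun ω => ((X₁ ω, X₂ ω), X₃ ω))) :=
        Measure.isProbabilityMeasure_map (hpair.prodMk h3).aemeasurable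
      simp [measure_univ]
  have huniq := condDistrib_ae_eq_of_measure_eq_compProd_of_measurable hpair h3 hcomp
  have h2' := ae_of_ae_map hpair.aemeasurable huniq
  filter_upwards [h2'] with ω hω
  rw [hω, hκapp]
end

section
/- Let G be a topologically sorted DAG on n nodes. Then every matrix in loc(G) is the limit, in the standard topology on real n × n matrices, of a sequence of positive definite matrices in loc(G); that is, loc(G) ∩ {positive definite matrices} is dense in loc(G). -/
open Matrix

noncomputable section

/-- The parent set of a node `j` in the DAG with edge relation `E`. -/
def parents {n : ℕ} (E : Fin n → Fin n → Prop) [DecidableRel E] (j : Fin n) : Finset (Fin n) :=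
  Finset.univ.filter (fun i => E i j)

/-- The rank of the submatrix of `σ` with rows `A` and columns `B`. -/
def subRank {n : ℕ} (σ : Matrix (Fin n) (Fin n) ℝ) (A B : Finset (Fin n)) : ℕ :=
  (σ.submatrix (fun a : A => (a : Fin n)) (fun b : B => (b : Fin n))).rank

/-- `loc(G)`: positive semidefinite matrices satisfying the rank conditions of the local
Markov relations of the DAG `G`. -/
def locSet {n : ℕ} (E : Fin n → Fin n → Prop) [DecidableRel E] :
    Set (Matrix (Fin n) (Fin n) ℝ) :=
  {σ | σ.PosSemidef ∧ ∀ i j : Fin n, i < j → ¬ E i j →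
    subRank σ (insert i (parents E j)) (insert j (parents E j)) =
      subRank σ (parents E j) (parents E j)}

namespace LocAux

lemma conjT {l o : Type*} (A : Matrix l o ℝ) : Aᴴ = Aᵀ := by
  ext i j; simp [Matrix.conjTranspose_apply]

/-- The rank of an arbitrary submatrix is at most the rank of the matrix. -/
lemma rank_submatrix_le' {l o m p : Type*} [Fintype l] [Fintype o] [Fintype m] [Fintype p]
    [DecidableEq m] [DecidableEq p]
    (M : Matrix m p ℝ) (f : l → m) (g : o → p) :
    (M.submatrix f g).rank ≤ M.rank := by
  have h : M.submatrix f g =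
      ((1 : Matrix m m ℝ).submatrix f _root_.id) *
        (M * (1 : Matrix p p ℝ).submatrix _root_.id g) := by
    ext a c
    simp [Matrix.mul_apply, Matrix.one_apply, Finset.sum_ite_eq, Finset.sum_ite_eq']
  rw [h]
  exact (Matrix.rank_mul_le_right _ _).trans (Matrix.rank_mul_le_left _ _)

lemma range_transpose_mul_self {m p : Type*} [Fintype m] [Fintype p] [DecidableEq p]
    (A : Matrix m p ℝ) :
    LinearMap.range (Aᵀ * A).mulVecLin = LinearMap.range Aᵀ.mulVecLin := by
  have hle : LinearMap.range (Aᵀ * A).mulVecLin ≤ LinearMap.range Aᵀ.mulVecLin := by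
    rw [Matrix.mulVecLin_mul]; exact LinearMap.range_comp_le_range _ _
  refine Submodule.eq_of_le_of_finrank_le hle ?_
  have h1 : (Aᵀ * A).rank = A.rank := Matrix.rank_transpose_mul_self A
  have h2 : Aᵀ.rank = A.rank := Matrix.rank_transpose A
  show Module.finrank ℝ (LinearMap.range Aᵀ.mulVecLin)
      ≤ Module.finrank ℝ (LinearMap.range (Aᵀ * A).mulVecLin)
  rw [show Module.finrank ℝ (LinearMap.range Aᵀ.mulVecLin) = Aᵀ.rank from rfl,
    show Module.finrank ℝ (LinearMap.range (Aᵀ * A).mulVecLin) = (Aᵀ * A).rank from rfl,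
    h1, h2]

variable {n : ℕ}

/-- Extension of a vector on a finset by zero. -/
def extK (K : Finset (Fin n)) (x : {a // a ∈ K} → ℝ) : Fin n → ℝ :=
  fun j => if h : j ∈ K then x ⟨j, h⟩ else 0

lemma sum_extK (K : Finset (Fin n)) (x : {a // a ∈ K} → ℝ) (g : Fin n → ℝ) :
    ∑ k, extK K x k * g k = ∑ k : {a // a ∈ K}, x k * g ↑k := by
  have h1 : ∀ k : {a // a ∈ K}, x k * g ↑k = extK K x ↑k * g ↑k := by
    intro k; simp [extK, k.2]
  simp_rw [h1]
  rw [Finset.sum_coe_sort K (fun j => extK K x j * g j)]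
  symm
  apply Finset.sum_subset (Finset.subset_univ K)
  intro j _ hj
  simp [extK, hj]

/-- A principal submatrix of a positive definite matrix has full rank. -/
lemma rank_submatrix_posDef {τ : Matrix (Fin n) (Fin n) ℝ} (hτ : τ.PosDef)
    (K : Finset (Fin n)) :
    (τ.submatrix (fun a : K => (a : Fin n)) (fun b : K => (b : Fin n))).rank = K.card := by
  set M := τ.submatrix (fun a : K => (a : Fin n)) (fun b : K => (b : Fin n)) with hM
  have hinj : ∀ x, M *ᵥ x = 0 → x = 0 := by
    intro x hx
    have h2 : ∀ k : {a // a ∈ K}, (τ *ᵥ extK K x) ↑k = (M *ᵥ x) k := by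
      intro k
      simp only [Matrix.mulVec, dotProduct, hM, Matrix.submatrix_apply]
      calc ∑ j, τ ↑k j * extK K x j = ∑ j, extK K x j * τ ↑k j :=
            Finset.sum_congr rfl fun j _ => mul_comm _ _
        _ = ∑ k' : {a // a ∈ K}, x k' * τ ↑k ↑k' := sum_extK K x _
        _ = ∑ k' : {a // a ∈ K}, τ ↑k ↑k' * x k' :=
            Finset.sum_congr rfl fun j _ => mul_comm _ _
    have key : extK K x ⬝ᵥ (τ *ᵥ extK K x) = 0 := by
      calc extK K x ⬝ᵥ (τ *ᵥ extK K x)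
          = ∑ k, extK K x k * (τ *ᵥ extK K x) k := rfl
        _ = ∑ k : {a // a ∈ K}, x k * (τ *ᵥ extK K x) ↑k := sum_extK K x _
        _ = ∑ k : {a // a ∈ K}, x k * (M *ᵥ x) k := by simp_rw [h2]
        _ = 0 := by rw [hx]; simp
    have hzero : extK K x = 0 := by
      by_contra hne
      have := hτ.dotProduct_mulVec_pos hne
      have hstar : star (extK K x) = extK K x := by funext i; exact star_trivial _
      rw [hstar, key] at this
      exact lt_irrefl 0 this
    funext k
    have : extK K x ↑k = 0 := by rw [hzero]; rfl
    simpa [extK, k.2] using this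
  have hker : LinearMap.ker M.mulVecLin = ⊥ := by
    rw [LinearMap.ker_eq_bot']
    intro x hx
    exact hinj x (by simpa [Matrix.mulVecLin_apply] using hx)
  have hrn := LinearMap.finrank_range_add_finrank_ker M.mulVecLin
  rw [hker, finrank_bot, add_zero] at hrn
  rw [Matrix.rank, hrn, Module.finrank_pi, Fintype.card_coe]

/-- A positive semidefinite matrix in `locSet E` admits, for each node `j`, regression
coefficients on the parents of `j` that reproduce all covariances with earlier nodes. -/
lemma exists_lam {E : Fin n → Fin n → Prop} [DecidableRel E] (hE : ∀ i j, E i j → i < j)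
    {σ : Matrix (Fin n) (Fin n) ℝ} (hσ : σ.PosSemidef)
    (hrk : ∀ i j : Fin n, i < j → ¬ E i j →
      subRank σ (insert i (parents E j)) (insert j (parents E j)) =
        subRank σ (parents E j) (parents E j))
    (j : Fin n) :
    ∃ l : {a // a ∈ parents E j} → ℝ,
      ∀ i, i < j → σ i j = ∑ k : {a // a ∈ parents E j}, σ i ↑k * l k := by
  classical
  set K := parents E j with hK
  set cK : {a // a ∈ K} → Fin n := fun a => ↑a with hcK
  open scoped MatrixOrder in
  obtain ⟨B, hB⟩ := CStarAlgebra.nonneg_iff_eq_star_mul_self.mp hσ.nonneg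
  rw [Matrix.star_eq_conjTranspose, conjT] at hB
  set BK : Matrix (Fin n) {a // a ∈ K} ℝ := B.submatrix _root_.id cK with hBK
  have hσap : ∀ a b : Fin n, σ a b = ∑ t, B t a * B t b := by
    intro a b; rw [hB]; simp [Matrix.mul_apply]
  have hKK : σ.submatrix cK cK = BKᵀ * BK := by
    ext a b; simp [Matrix.mul_apply, hBK, hσap]
  -- step a : regression coefficients on K
  have hvmem : (fun k : {a // a ∈ K} => σ (cK k) j)
      ∈ LinearMap.range (σ.submatrix cK cK).mulVecLin := by
    rw [hKK, range_transpose_mul_self BK]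
    refine ⟨fun t => B t j, ?_⟩
    funext k
    simp [Matrix.mulVecLin_apply, Matrix.mulVec, dotProduct, hσap, hBK]
  obtain ⟨lK, hlK⟩ := hvmem
  have hlK' : ∀ k : {a // a ∈ K}, ∑ k' : {a // a ∈ K}, σ ↑k ↑k' * lK k' = σ ↑k j := by
    intro k
    have := congrFun hlK k
    simpa [Matrix.mulVecLin_apply, Matrix.mulVec, dotProduct] using this
  -- kernel transfer
  have hker : ∀ d : {a // a ∈ K} → ℝ, ((σ.submatrix cK cK) *ᵥ d = 0) →
      ∀ i : Fin n, ∑ k : {a // a ∈ K}, σ i ↑k * d k = 0 := by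
    intro d hd i
    have hBKd : BK *ᵥ d = 0 := by
      have h1 : BKᵀ *ᵥ (BK *ᵥ d) = 0 := by
        rw [Matrix.mulVec_mulVec, ← hKK]; exact hd
      have h0 : (BK *ᵥ d) ⬝ᵥ (BK *ᵥ d) = 0 := by
        calc (BK *ᵥ d) ⬝ᵥ (BK *ᵥ d) = d ⬝ᵥ (BKᵀ *ᵥ (BK *ᵥ d)) := by
              symm; rw [Matrix.dotProduct_mulVec, Matrix.vecMul_transpose]
          _ = 0 := by rw [h1, dotProduct_zero]
      exact dotProduct_self_eq_zero.mp h0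
    calc ∑ k : {a // a ∈ K}, σ i ↑k * d k
        = ∑ t, B t i * (BK *ᵥ d) t := by
          simp only [hσap, Matrix.mulVec, dotProduct, hBK, Matrix.submatrix_apply,
            Finset.sum_mul, Finset.mul_sum, _root_.id]
          rw [Finset.sum_comm]
          exact Finset.sum_congr rfl fun t _ => Finset.sum_congr rfl fun k _ => by ring
      _ = 0 := by rw [hBKd]; simp
  refine ⟨lK, fun i hij => ?_⟩
  by_cases hEij : E i j
  · have hiK : i ∈ K := by simp [hK, parents, hEij]
    exact (hlK' ⟨i, hiK⟩).symm
  · -- step b : use the rank condition for the non-edge (i, j)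
    have hjK : j ∉ K := fun h => absurd (hE j j (by simpa [hK, parents] using h)) (lt_irrefl j)
    set A : Finset (Fin n) := insert i K with hA
    set Bf : Finset (Fin n) := insert j K with hBf
    set cA : {a // a ∈ A} → Fin n := fun a => ↑a with hcA
    set cB : {a // a ∈ Bf} → Fin n := fun a => ↑a with hcB
    set X := σ.submatrix cA cB with hX
    set Y := σ.submatrix cA cK with hY
    have hYX : Y = X * (Matrix.of fun (b : {x // x ∈ Bf}) (k : {a // a ∈ K}) =>
        if (b : Fin n) = ↑k then (1:ℝ) else 0) := by
      ext a k
      rw [Matrix.mul_apply]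
      rw [Finset.sum_eq_single (⟨↑k, Finset.mem_insert_of_mem k.2⟩ : {x // x ∈ Bf})]
      · simp [hX, hY, hcA, hcB, hcK]
      · intro b _ hb
        have hbk : (b : Fin n) ≠ ↑k := fun h => hb (Subtype.ext h)
        simp [hbk]
      · intro h; exact absurd (Finset.mem_univ _) h
    have hle : LinearMap.range Y.mulVecLin ≤ LinearMap.range X.mulVecLin := by
      rw [hYX, Matrix.mulVecLin_mul]; exact LinearMap.range_comp_le_range _ _
    have hXr : X.rank = (σ.submatrix cK cK).rank := hrk i j hij hEij
    have hKY : (σ.submatrix cK cK).rank ≤ Y.rank := by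
      have hsub : σ.submatrix cK cK = Y.submatrix
          (fun k : {a // a ∈ K} => (⟨↑k, Finset.mem_insert_of_mem k.2⟩ : {x // x ∈ A}))
          _root_.id := by
        ext a b; simp [hY, hcA, hcK]
      rw [hsub]
      exact rank_submatrix_le' _ _ _
    have heq : LinearMap.range Y.mulVecLin = LinearMap.range X.mulVecLin := by
      refine Submodule.eq_of_le_of_finrank_le hle ?_
      show Module.finrank ℝ (LinearMap.range X.mulVecLin)
          ≤ Module.finrank ℝ (LinearMap.range Y.mulVecLin)
      rw [show Module.finrank ℝ (LinearMap.range X.mulVecLin) = X.rank from rfl,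
        show Module.finrank ℝ (LinearMap.range Y.mulVecLin) = Y.rank from rfl, hXr]
      exact hKY
    obtain ⟨μ, hμ⟩ : (fun a : {x // x ∈ A} => σ ↑a j) ∈ LinearMap.range Y.mulVecLin := by
      rw [heq]
      refine ⟨Pi.single (⟨j, Finset.mem_insert_self _ _⟩ : {x // x ∈ Bf}) 1, ?_⟩
      funext a
      simp only [Matrix.mulVecLin_apply, Matrix.mulVec, dotProduct, hX,
        Matrix.submatrix_apply, Pi.single_apply]
      rw [Finset.sum_eq_single (⟨j, Finset.mem_insert_self _ _⟩ : {x // x ∈ Bf})]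
      · simp [hcA, hcB]
      · intro b _ hb; simp [hb]
      · intro h; exact absurd (Finset.mem_univ _) h
    have hμ' : ∀ a : {x // x ∈ A}, ∑ k : {a // a ∈ K}, σ ↑a ↑k * μ k = σ ↑a j := by
      intro a
      have := congrFun hμ a
      simpa [Matrix.mulVecLin_apply, Matrix.mulVec, dotProduct, hY] using this
    have hd : (σ.submatrix cK cK) *ᵥ (μ - lK) = 0 := by
      funext k
      have h1 := hμ' ⟨↑k, Finset.mem_insert_of_mem k.2⟩
      have h2 := hlK' k
      simp only [Matrix.mulVec, dotProduct, Matrix.submatrix_apply, Pi.sub_apply,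
        mul_sub, Finset.sum_sub_distrib, Pi.zero_apply]
      simp only [hcK] at h1 h2 ⊢
      rw [show ((⟨(↑k : Fin n), Finset.mem_insert_of_mem k.2⟩ : {x // x ∈ A}) : Fin n)
          = (↑k : Fin n) from rfl] at h1
      rw [h1, h2, sub_self]
    have hkt := hker (μ - lK) hd i
    have hsum : ∑ k : {a // a ∈ K}, σ i ↑k * μ k = ∑ k : {a // a ∈ K}, σ i ↑k * lK k := by
      simp only [Pi.sub_apply, mul_sub, Finset.sum_sub_distrib] at hkt
      linarith
    have h3 := hμ' ⟨i, Finset.mem_insert_self _ _⟩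
    rw [show ((⟨i, Finset.mem_insert_self i K⟩ : {x // x ∈ A}) : Fin n) = i from rfl] at h3
    rw [← h3, hsum]

/-- A positive definite matrix satisfying the linear regression relations of the DAG
belongs to `locSet E`. -/
lemma mem_locSet_of_posDef {E : Fin n → Fin n → Prop} [DecidableRel E]
    (hE : ∀ i j, E i j → i < j)
    {τ : Matrix (Fin n) (Fin n) ℝ} (hτ : τ.PosDef)
    (Λ : Matrix (Fin n) (Fin n) ℝ)
    (hsupp : ∀ k j, Λ k j ≠ 0 → E k j)
    (hrel : ∀ i j : Fin n, i < j → τ i j = ∑ k, Λ k j * τ i k) :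
    τ ∈ locSet E := by
  classical
  refine ⟨hτ.posSemidef, fun i j hij hnE => ?_⟩
  set K := parents E j with hK
  have hmemK : ∀ k, k ∈ K ↔ E k j := by intro k; simp [hK, parents]
  set A : Finset (Fin n) := insert i K with hA
  set Bf : Finset (Fin n) := insert j K with hBf
  set cK : {a // a ∈ K} → Fin n := fun a => ↑a with hcK
  set cA : {a // a ∈ A} → Fin n := fun a => ↑a with hcA
  set cB : {a // a ∈ Bf} → Fin n := fun a => ↑a with hcB
  have hjK : j ∉ K := fun h => absurd (hE j j ((hmemK j).mp h)) (lt_irrefl j)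
  have hltj : ∀ a : {x // x ∈ A}, (a : Fin n) < j := by
    intro a
    rcases Finset.mem_insert.mp a.2 with h | h
    · rw [h]; exact hij
    · exact hE _ _ ((hmemK _).mp h)
  have hKcard : subRank τ K K = K.card := rank_submatrix_posDef hτ K
  rw [show subRank τ (insert i (parents E j)) (insert j (parents E j))
      = (τ.submatrix cA cB).rank from rfl] at *
  set X := τ.submatrix cA cB with hX
  set Y := τ.submatrix cA cK with hY
  set S : Matrix {a // a ∈ K} {x // x ∈ Bf} ℝ := Matrix.of
    (fun (k : {a // a ∈ K}) (b : {x // x ∈ Bf}) =>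
      if (b : Fin n) = j then Λ ↑k j else if (b : Fin n) = ↑k then 1 else 0) with hS
  have hXYS : X = Y * S := by
    ext a b
    rw [Matrix.mul_apply]
    by_cases hbj : (b : Fin n) = j
    · have h1 : ∀ k : {a // a ∈ K}, Y a k * S k b = Λ ↑k j * τ ↑a ↑k := by
        intro k; simp [hY, hS, hbj, mul_comm, hcA, hcK]
      simp_rw [h1]
      have hx : extK K (fun k : {a // a ∈ K} => Λ ↑k j) = fun k => Λ k j := by
        funext k
        by_cases hk : k ∈ K
        · simp [extK, hk]
        · have : Λ k j = 0 := by
            by_contra h; exact hk ((hmemK k).mpr (hsupp k j h))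
          simp [extK, hk, this]
      have h2 := sum_extK K (fun k : {a // a ∈ K} => Λ ↑k j) (fun k => τ ↑a k)
      rw [hx] at h2
      rw [← h2]
      show τ (cA a) (cB b) = _
      rw [show cB b = j from hbj]
      exact hrel ↑a j (hltj a)
    · have hbK : (b : Fin n) ∈ K := by
        rcases Finset.mem_insert.mp b.2 with h | h
        · exact absurd h hbj
        · exact h
      rw [Finset.sum_eq_single (⟨↑b, hbK⟩ : {a // a ∈ K})]
      · simp [hY, hS, hbj, hX, hcA, hcB, hcK]
      · intro k _ hk
        have hkb : (b : Fin n) ≠ ↑k := fun h => hk (by exact Subtype.ext h.symm)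
        simp [hS, hbj, hkb]
      · intro h; exact absurd (Finset.mem_univ _) h
  have hupper : X.rank ≤ K.card := by
    rw [hXYS]
    refine (Matrix.rank_mul_le_left _ _).trans ?_
    refine (Matrix.rank_le_card_width _).trans ?_
    rw [Fintype.card_coe]
  have hlower : K.card ≤ X.rank := by
    have hsub : τ.submatrix cK cK = X.submatrix
        (fun k : {a // a ∈ K} => (⟨↑k, Finset.mem_insert_of_mem k.2⟩ : {x // x ∈ A}))
        (fun k : {a // a ∈ K} => (⟨↑k, Finset.mem_insert_of_mem k.2⟩ : {x // x ∈ Bf})) := by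
      ext a b; simp [hX, hcA, hcB, hcK]
    calc K.card = (τ.submatrix cK cK).rank := (rank_submatrix_posDef hτ K).symm
      _ ≤ X.rank := by rw [hsub]; exact rank_submatrix_le' _ _ _
  rw [show subRank τ K K = (τ.submatrix cK cK).rank from rfl]
  rw [rank_submatrix_posDef hτ K]
  exact le_antisymm hupper hlower

lemma mul_one_sub_apply (W Λ : Matrix (Fin n) (Fin n) ℝ) (i j : Fin n) :
    (W * (1 - Λ)) i j = W i j - ∑ k, Λ k j * W i k := by
  rw [Matrix.mul_apply]
  simp only [Matrix.sub_apply, Matrix.one_apply, mul_sub]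
  rw [Finset.sum_sub_distrib]
  congr 1
  · simp [mul_ite, Finset.sum_ite_eq']
  · exact Finset.sum_congr rfl fun k _ => mul_comm _ _

end LocAux

open Filter Topology in
/-- Proposition 3(a): `loc(G) ∩ Σ⁺⁺` is dense in `loc(G)`. -/
theorem locSet_subset_closure_posDef {n : ℕ} (hn : 1 ≤ n)
    (E : Fin n → Fin n → Prop) [DecidableRel E] (hE : ∀ i j, E i j → i < j) :
    locSet E ⊆ closure (locSet E ∩ {σ | σ.PosDef}) := by
  classical
  intro σ hσ
  obtain ⟨hpsd, hrk⟩ := hσ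
  -- regression coefficients
  choose lam hlam using fun j => LocAux.exists_lam hE hpsd hrk j
  set Λ : Matrix (Fin n) (Fin n) ℝ :=
    Matrix.of (fun k j => LocAux.extK (parents E j) (lam j) k) with hΛ
  have hsupp : ∀ k j, Λ k j ≠ 0 → E k j := by
    intro k j h
    by_contra hne
    have hk : k ∉ parents E j := by simp [parents, hne]
    exact h (by simp [hΛ, LocAux.extK, hk])
  have hrelσ : ∀ i j : Fin n, i < j → σ i j = ∑ k, Λ k j * σ i k := by
    intro i j hij
    have h2 := LocAux.sum_extK (parents E j) (lam j) (fun k => σ i k)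
    calc σ i j = ∑ k : {a // a ∈ parents E j}, σ i ↑k * lam j k := hlam j i hij
      _ = ∑ k : {a // a ∈ parents E j}, lam j k * σ i ↑k :=
          Finset.sum_congr rfl fun k _ => mul_comm _ _
      _ = ∑ k, Λ k j * σ i k := by rw [← h2]; rfl
  set T : Matrix (Fin n) (Fin n) ℝ := 1 - Λ with hT
  have hΛdiagless : ∀ i j : Fin n, ¬ i < j → Λ i j = 0 := by
    intro i j h
    by_contra hne
    exact h (hE i j (hsupp i j hne))
  have hΛtri : Λ.BlockTriangular _root_.id := by
    intro i j hij
    exact hΛdiagless i j (fun h => absurd (lt_trans h hij) (lt_irrefl _))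
  have hTtri : T.BlockTriangular _root_.id := Matrix.blockTriangular_one.sub hΛtri
  have hdet : T.det = 1 := by
    rw [Matrix.det_of_upperTriangular hTtri]
    have : ∀ i : Fin n, T i i = 1 := by
      intro i
      simp [hT, Matrix.sub_apply, Matrix.one_apply, hΛdiagless i i (lt_irrefl i)]
    simp [this]
  have hU : IsUnit T.det := by rw [hdet]; exact isUnit_one
  haveI : Invertible T := T.invertibleOfIsUnitDet hU
  have hTinvtri : T⁻¹.BlockTriangular _root_.id :=
    Matrix.blockTriangular_inv_of_blockTriangular hTtri
  set C : Matrix (Fin n) (Fin n) ℝ := (T⁻¹)ᵀ * T⁻¹ with hC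
  -- C is positive definite
  have hCpd : C.PosDef := by
    refine Matrix.PosDef.of_dotProduct_mulVec_pos ?_ ?_
    · show Cᴴ = C
      rw [LocAux.conjT, hC, Matrix.transpose_mul, Matrix.transpose_transpose]
    · intro x hx
      have hstar : star x = x := by funext i; exact star_trivial _
      have hxv : T⁻¹ *ᵥ x ≠ 0 := by
        intro h
        apply hx
        have : (T * T⁻¹) *ᵥ x = x := by rw [Matrix.mul_nonsing_inv T hU, Matrix.one_mulVec]
        rw [← this, ← Matrix.mulVec_mulVec, h, Matrix.mulVec_zero]
      have hform : star x ⬝ᵥ C *ᵥ x = (T⁻¹ *ᵥ x) ⬝ᵥ (T⁻¹ *ᵥ x) := by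
        rw [hstar, hC, ← Matrix.mulVec_mulVec]
        conv_lhs => rw [Matrix.dotProduct_mulVec, Matrix.vecMul_transpose]
      rw [hform]
      refine lt_of_le_of_ne (Finset.sum_nonneg fun t _ => mul_self_nonneg _) ?_
      intro h
      exact hxv (dotProduct_self_eq_zero.mp h.symm)
  -- the perturbed matrices satisfy the relations
  have hσT : ∀ i j : Fin n, i < j → (σ * T) i j = 0 := by
    intro i j hij
    rw [hT, LocAux.mul_one_sub_apply, ← hrelσ i j hij, sub_self]
  have hCT : ∀ i j : Fin n, i < j → (C * T) i j = 0 := by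
    intro i j hij
    have : C * T = (T⁻¹)ᵀ := by
      rw [hC, mul_assoc, Matrix.nonsing_inv_mul T hU, mul_one]
    rw [this, Matrix.transpose_apply]
    exact hTinvtri (show _root_.id i < _root_.id j from hij)
  have hmem : ∀ ε : ℝ, 0 < ε → σ + ε • C ∈ locSet E ∩ {σ | σ.PosDef} := by
    intro ε hε
    have hεC : (ε • C).PosDef := by
      refine Matrix.PosDef.of_dotProduct_mulVec_pos ?_ ?_
      · show (ε • C)ᴴ = ε • C
        rw [LocAux.conjT, Matrix.transpose_smul]
        congr 1
        rw [← LocAux.conjT]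
        exact hCpd.isHermitian
      · intro x hx
        have : star x ⬝ᵥ (ε • C) *ᵥ x = ε * (star x ⬝ᵥ C *ᵥ x) := by
          rw [Matrix.smul_mulVec, dotProduct_smul, smul_eq_mul]
        rw [this]
        exact mul_pos hε (hCpd.dotProduct_mulVec_pos hx)
    have hpd : (σ + ε • C).PosDef := Matrix.PosDef.posSemidef_add hpsd hεC
    have hrelτ : ∀ i j : Fin n, i < j → (σ + ε • C) i j = ∑ k, Λ k j * (σ + ε • C) i k := by
      intro i j hij
      have hz : ((σ + ε • C) * T) i j = 0 := by
        rw [add_mul, Matrix.smul_mul, Matrix.add_apply, Matrix.smul_apply,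
          hσT i j hij, hCT i j hij, smul_zero, add_zero]
      rw [hT, LocAux.mul_one_sub_apply] at hz
      linarith [hz]
    exact ⟨LocAux.mem_locSet_of_posDef hE hpd Λ hsupp hrelτ, hpd⟩
  -- pass to the limit
  have htend : Tendsto (fun m : ℕ => σ + (1 / (m + 1) : ℝ) • C) atTop (𝓝 σ) := by
    have h0 : Tendsto (fun m : ℕ => (1 / (m + 1) : ℝ)) atTop (𝓝 0) :=
      tendsto_one_div_add_atTop_nhds_zero_nat
    have h1 := h0.smul_const C
    rw [zero_smul] at h1
    have h2 := (tendsto_const_nhds (x := σ) (f := atTop)).add h1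
    rwa [add_zero] at h2
  refine mem_closure_of_tendsto htend ?_
  refine Eventually.of_forall fun m => ?_
  exact hmem _ (by positivity)
end
end

section
/- Let G be a topologically sorted DAG on n nodes. Then every matrix in loc(G) all of whose diagonal entries equal 1 is the limit, in the standard topology on real n × n matrices, of a sequence of positive definite matrices in loc(G) all of whose diagonal entries equal 1. -/
open Matrix

noncomputable section

open Submodule Module Finset

namespace Prop3

lemma rank_le_of_cols {m₁ n₁ m₂ n₂ : Type*} [Fintype m₁] [Fintype n₁] [Fintype m₂] [Fintype n₂]
    (A : Matrix m₁ n₁ ℝ) (S : Matrix m₂ n₂ ℝ) (π : (m₁ → ℝ) →ₗ[ℝ] (m₂ → ℝ))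
    (h : ∀ b : n₂, ∃ b' : n₁, π (fun a => A a b') = fun a => S a b) :
    S.rank ≤ A.rank := by
  rw [Matrix.rank_eq_finrank_span_cols, Matrix.rank_eq_finrank_span_cols]
  have hle : span ℝ (Set.range Sᵀ) ≤ (span ℝ (Set.range Aᵀ)).map π := by
    rw [Submodule.span_le]
    rintro _ ⟨b, rfl⟩
    obtain ⟨b', hb'⟩ := h b
    exact ⟨Aᵀ b', Submodule.subset_span ⟨b', rfl⟩, hb'⟩
  calc finrank ℝ ↥(span ℝ (Set.range Sᵀ)) ≤ finrank ℝ ↥((span ℝ (Set.range Aᵀ)).map π) :=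
        Submodule.finrank_mono hle
    _ ≤ finrank ℝ ↥(span ℝ (Set.range Aᵀ)) := Submodule.finrank_map_le π _

lemma rank_eq_finrank_span_rows {m₁ n₁ : Type*} [Fintype m₁] [Fintype n₁]
    (A : Matrix m₁ n₁ ℝ) : A.rank = finrank ℝ (span ℝ (Set.range A)) := by
  rw [← Matrix.rank_transpose, Matrix.rank_eq_finrank_span_cols]
  rfl

lemma posDef_conj {m : Type*} [Fintype m] [DecidableEq m] {X : Matrix m m ℝ} (hX : X.PosDef)
    (P : Matrix m m ℝ) (hP : IsUnit P.det) : (Pᵀ * X * P).PosDef := by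
  have : Invertible P := P.invertibleOfIsUnitDet hP
  refine Matrix.PosDef.of_dotProduct_mulVec_pos ?_ ?_
  · have h1 : Xᵀ = X := by
      have := hX.1
      rwa [Matrix.IsHermitian, conjTranspose_eq_transpose_of_trivial] at this
    rw [Matrix.IsHermitian, conjTranspose_eq_transpose_of_trivial, Matrix.transpose_mul,
      Matrix.transpose_mul, transpose_transpose, h1, Matrix.mul_assoc]
  · intro x hx
    have hPx : P *ᵥ x ≠ 0 := fun h => hx <| by
      have hinj := P.mulVec_injective_of_invertible
      exact hinj (show P *ᵥ x = P *ᵥ 0 by rw [h, Matrix.mulVec_zero])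
    have hpos := hX.dotProduct_mulVec_pos hPx
    have hrw : dotProduct (star x) ((Pᵀ * X * P) *ᵥ x)
        = dotProduct (star (P *ᵥ x)) (X *ᵥ (P *ᵥ x)) := by
      rw [← Matrix.mulVec_mulVec, ← Matrix.mulVec_mulVec, Matrix.dotProduct_mulVec,
        Matrix.vecMul_transpose]
      simp [star_trivial]
    rw [hrw]; exact hpos

lemma posDef_transpose_mul_self {m : Type*} [Fintype m] [DecidableEq m]
    (P : Matrix m m ℝ) (hP : IsUnit P.det) : (Pᵀ * P).PosDef := by
  have := posDef_conj (Matrix.PosDef.one (n := m) (R := ℝ)) P hP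
  simpa using this

lemma posDef_diag_pos {m : Type*} [Fintype m] [DecidableEq m] {X : Matrix m m ℝ}
    (hX : X.PosDef) (a : m) : 0 < X a a := by
  have := hX.dotProduct_mulVec_pos (x := Pi.single a (1 : ℝ)) (by simp)
  simpa [Matrix.mulVec_single, dotProduct_single, star_trivial] using this

lemma posDef_submatrix {n m : Type*} [Fintype n] [DecidableEq n] [Fintype m] [DecidableEq m]
    {X : Matrix n n ℝ} (hX : X.PosDef) (e : m → n) (he : Function.Injective e) :
    (X.submatrix e e).PosDef := by
  refine Matrix.PosDef.of_dotProduct_mulVec_pos ?_ ?_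
  · have h1 := hX.1
    rw [Matrix.IsHermitian, conjTranspose_submatrix, h1]
  · intro x hx
    classical
    set y : n → ℝ := Function.extend e x 0 with hy
    have hye : ∀ k, y (e k) = x k := fun k => he.extend_apply x 0 k
    have hy0 : ∀ b, (¬ ∃ k, e k = b) → y b = 0 := fun b hb => by
      rw [hy, Function.extend_apply' _ _ _ hb]; rfl
    have hsum : ∀ (f : n → ℝ), ∑ b, y b * f b = ∑ k, x k * f (e k) := by
      intro f
      calc ∑ b, y b * f b = ∑ b ∈ Finset.univ.image e, y b * f b := by
            refine (Finset.sum_subset (Finset.subset_univ _) ?_).symm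
            intro b _ hb
            have hnb : ¬ ∃ k, e k = b := by simpa [Finset.mem_image] using hb
            rw [hy0 b hnb, zero_mul]
        _ = ∑ k, y (e k) * f (e k) :=
            Finset.sum_image (by intros a _ b _ h; exact he h)
        _ = ∑ k, x k * f (e k) := by simp [hye]
    have hsum' : ∀ (f : n → ℝ), ∑ b, f b * y b = ∑ k, f (e k) * x k := by
      intro f
      simpa [mul_comm] using hsum f
    have hyne : y ≠ 0 := by
      obtain ⟨k, hk⟩ := Function.ne_iff.mp hx
      exact fun h => hk (by rw [← hye k, h]; rfl)
    have hpos := hX.dotProduct_mulVec_pos hyne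
    have key : dotProduct (star y) (X *ᵥ y) = dotProduct (star x) ((X.submatrix e e) *ᵥ x) := by
      simp only [star_trivial, dotProduct, Matrix.mulVec, Matrix.submatrix_apply]
      rw [hsum (fun a => ∑ b, X a b * y b)]
      refine Finset.sum_congr rfl fun k _ => ?_
      rw [hsum' (fun b => X (e k) b)]
    rwa [key] at hpos

lemma mem_locSet_of_rec {n : ℕ} (E : Fin n → Fin n → Prop) [DecidableRel E]
    (hE : ∀ i j, E i j → i < j) {σ' Λ' : Matrix (Fin n) (Fin n) ℝ} (hPD : σ'.PosDef)
    (hsupp : ∀ k j, ¬ E k j → Λ' k j = 0)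
    (hrec : ∀ a j : Fin n, a < j → σ' a j = ∑ k, σ' a k * Λ' k j) :
    σ' ∈ locSet E := by
  refine ⟨hPD.posSemidef, fun i j hij hEij => ?_⟩
  set K := parents E j with hK
  have hmemK : ∀ k, k ∈ K ↔ E k j := by
    intro k; simp [hK, parents]
  have hKlt : ∀ k, k ∈ K → k < j := fun k hk => hE k j ((hmemK k).mp hk)
  set Ki := insert i K with hKi
  set Kj := insert j K with hKj
  set S : Matrix (↥K) (↥K) ℝ :=
    σ'.submatrix (fun a : ↥K => (a : Fin n)) (fun b : ↥K => (b : Fin n)) with hS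
  set A : Matrix (↥Ki) (↥Kj) ℝ :=
    σ'.submatrix (fun a : ↥Ki => (a : Fin n)) (fun b : ↥Kj => (b : Fin n)) with hA
  have hSpd : S.PosDef := posDef_submatrix hPD _ Subtype.coe_injective
  have hSrank : S.rank = K.card := by
    rw [Matrix.rank_of_isUnit _
        ((Matrix.isUnit_iff_isUnit_det _).mpr (isUnit_iff_ne_zero.mpr hSpd.det_pos.ne')),
      Fintype.card_coe]
  have hlow : S.rank ≤ A.rank := by
    refine rank_le_of_cols A S
      (LinearMap.funLeft ℝ ℝ (fun k : ↥K => (⟨k, Finset.mem_insert_of_mem k.2⟩ : ↥Ki))) ?_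
    intro b
    exact ⟨⟨b, Finset.mem_insert_of_mem b.2⟩, rfl⟩
  have hup : A.rank ≤ K.card := by
    rw [Matrix.rank_eq_finrank_span_cols]
    have hle : span ℝ (Set.range Aᵀ) ≤
        span ℝ (Set.range (fun k : ↥K => (fun a : ↥Ki => σ' (a : Fin n) (k : Fin n)))) := by
      rw [Submodule.span_le]
      rintro _ ⟨b, rfl⟩
      rcases Finset.mem_insert.mp b.2 with hb | hb
      · have hcol : (Aᵀ b) =
            ∑ k : ↥K, Λ' (k : Fin n) j • (fun a : ↥Ki => σ' (a : Fin n) (k : Fin n)) := by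
          funext a
          have ha : (a : Fin n) < j := by
            rcases Finset.mem_insert.mp a.2 with h | h
            · exact h ▸ hij
            · exact hKlt _ h
          have h0 : σ' (a : Fin n) (b : Fin n) = ∑ k : Fin n, σ' a k * Λ' k j := by
            rw [show (b : Fin n) = j from hb]; exact hrec a j ha
          have h1 : ∑ k : Fin n, σ' (a : Fin n) k * Λ' k j
              = ∑ k ∈ K, σ' (a : Fin n) k * Λ' k j := by
            refine (Finset.sum_subset (K.subset_univ) ?_).symm
            intro k _ hk
            rw [hsupp k j (fun h => hk ((hmemK k).mpr h)), mul_zero]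
          have h2 : ∑ k ∈ K, σ' (a : Fin n) k * Λ' k j
              = ∑ k : ↥K, σ' (a : Fin n) (k : Fin n) * Λ' (k : Fin n) j :=
            (Finset.sum_coe_sort K _).symm
          simp only [Finset.sum_apply, Pi.smul_apply, smul_eq_mul]
          rw [show (Aᵀ b) a = σ' (a : Fin n) (b : Fin n) from rfl] at *
          rw [h0, h1, h2]
          exact Finset.sum_congr rfl fun k _ => mul_comm _ _
        rw [hcol]
        exact Submodule.sum_mem _ fun k _ =>
          Submodule.smul_mem _ _ (Submodule.subset_span ⟨k, rfl⟩)
      · exact Submodule.subset_span ⟨⟨b, hb⟩, rfl⟩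
    calc finrank ℝ ↥(span ℝ (Set.range Aᵀ)) ≤ _ := Submodule.finrank_mono hle
      _ ≤ Fintype.card ↥K := finrank_range_le_card _
      _ = K.card := Fintype.card_coe K
  have : A.rank = S.rank := le_antisymm (hSrank ▸ hup) hlow
  simpa [subRank, ← hA, ← hS] using this

lemma exists_lambda {n : ℕ} (E : Fin n → Fin n → Prop) [DecidableRel E]
    {σ : Matrix (Fin n) (Fin n) ℝ} (hσ : σ.PosSemidef) (j : Fin n)
    (hloc : ∀ i : Fin n, i < j → ¬ E i j →
      subRank σ (insert i (parents E j)) (insert j (parents E j)) =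
        subRank σ (parents E j) (parents E j)) :
    ∃ lam : Fin n → ℝ, (∀ k, k ∉ parents E j → lam k = 0) ∧
      ∀ i : Fin n, i < j → σ i j = ∑ k ∈ parents E j, σ i k * lam k := by
  classical
  have hsym : ∀ a b, σ a b = σ b a := by
    intro a b
    have h1 := hσ.1
    rw [Matrix.IsHermitian, conjTranspose_eq_transpose_of_trivial] at h1
    conv_lhs => rw [← h1]
    exact Matrix.transpose_apply _ _ _
  obtain ⟨B, hB⟩ : ∃ B : Matrix (Fin n) (Fin n) ℝ, σ = Bᴴ * B := by
    open scoped MatrixOrder in exact CStarAlgebra.nonneg_iff_eq_star_mul_self.mp hσ.nonneg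
  set g : Fin n → EuclideanSpace ℝ (Fin n) := fun a => WithLp.toLp 2 (fun r => B r a) with hg
  have hgram : ∀ a b : Fin n, σ a b = inner ℝ (g a) (g b) := by
    intro a b
    rw [hB]
    simp [Matrix.mul_apply, PiLp.inner_apply, hg, Matrix.conjTranspose_apply, mul_comm]
  set K := parents E j with hK
  have hmemK : ∀ k, k ∈ K ↔ E k j := by intro k; simp [hK, parents]
  set V : Submodule ℝ (EuclideanSpace ℝ (Fin n)) := span ℝ (Set.range (fun k : ↥K => g k))
    with hV
  set p : EuclideanSpace ℝ (Fin n) := (orthogonalProjection V (g j) : EuclideanSpace ℝ (Fin n))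
    with hp
  have hpV : p ∈ V := Submodule.coe_mem _
  obtain ⟨c, hc⟩ := (mem_span_range_iff_exists_fun ℝ).mp hpV
  set lam : Fin n → ℝ := fun k => if h : k ∈ K then c ⟨k, h⟩ else 0 with hlam
  have hlamc : ∀ k : ↥K, lam ↑k = c k := by
    intro k; rw [hlam]; simp
  have hdot : ∀ a : Fin n, σ a j - ∑ k ∈ K, σ a k * lam k = inner ℝ (g a) (g j - p) := by
    intro a
    rw [inner_sub_right, ← hgram a j]
    have h1 : (inner ℝ (g a) p : ℝ) = ∑ k : ↥K, c k * inner ℝ (g a) (g ↑k) := by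
      rw [← hc, inner_sum]
      exact Finset.sum_congr rfl fun k _ => real_inner_smul_right _ _ _
    have h2 : ∑ k ∈ K, σ a k * lam k = ∑ k : ↥K, c k * inner ℝ (g a) (g ↑k) := by
      rw [← Finset.sum_coe_sort K (fun k => σ a k * lam k)]
      exact Finset.sum_congr rfl fun k _ => by rw [hlamc k, ← hgram a ↑k, mul_comm]
    rw [h1, h2]
  have hortho : ∀ v ∈ V, (inner ℝ v (g j - p) : ℝ) = 0 := by
    intro v hv
    have hm := Submodule.sub_starProjection_mem_orthogonal (K := V) (g j)
    exact (Submodule.mem_orthogonal V _).mp hm v hv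
  have hk0 : ∀ k : Fin n, (hk : k ∈ K) → σ k j - ∑ k' ∈ K, σ k k' * lam k' = 0 := by
    intro k hk
    rw [hdot]
    exact hortho _ (Submodule.subset_span ⟨⟨k, hk⟩, rfl⟩)
  refine ⟨lam, fun k hk => dif_neg hk, ?_⟩
  intro i hij
  by_cases hiK : i ∈ K
  · have := hk0 i hiK; linarith
  · have hEij : ¬ E i j := fun h => hiK ((hmemK i).mpr h)
    by_contra hne
    set Ki := insert i K with hKi
    set Kj := insert j K with hKj
    set A : Matrix (↥Ki) (↥Kj) ℝ :=
      σ.submatrix (fun a : ↥Ki => (a : Fin n)) (fun b : ↥Kj => (b : Fin n)) with hA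
    set S : Matrix (↥K) (↥K) ℝ :=
      σ.submatrix (fun a : ↥K => (a : Fin n)) (fun b : ↥K => (b : Fin n)) with hS
    have hrank : A.rank = S.rank := hloc i hij hEij
    set rK : ↥K → (↥Kj → ℝ) := fun k => fun b => σ ↑k ↑b with hrK
    set rowi : ↥Kj → ℝ := fun b => σ i ↑b with hrowi
    set W : Submodule ℝ (↥Kj → ℝ) := span ℝ (Set.range rK) with hW
    -- (1) S.rank ≤ finrank W
    have h1 : S.rank ≤ finrank ℝ ↥W := by
      have hle : S.rank ≤ (Matrix.of (fun (b : ↥Kj) (k : ↥K) => rK k b)).rank := by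
        refine rank_le_of_cols _ S
          (LinearMap.funLeft ℝ ℝ
            (fun k : ↥K => (⟨↑k, Finset.mem_insert_of_mem k.2⟩ : ↥Kj))) ?_
        intro b
        refine ⟨b, ?_⟩
        funext k'
        show σ ↑b ↑k' = σ ↑k' ↑b
        exact hsym _ _
      have hRK : (Matrix.of (fun (b : ↥Kj) (k : ↥K) => rK k b)).rank = finrank ℝ ↥W := by
        rw [Matrix.rank_eq_finrank_span_cols]
        congr 1
      rwa [hRK] at hle
    -- (2) rowi ∉ W
    have h2 : rowi ∉ W := by
      intro hmem
      obtain ⟨α, hα⟩ := (mem_span_range_iff_exists_fun ℝ).mp hmem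
      have hval : ∀ b : ↥Kj, σ i ↑b = ∑ k : ↥K, α k * σ ↑k ↑b := by
        intro b
        have := congrFun hα b
        simp only [Finset.sum_apply, Pi.smul_apply, smul_eq_mul] at this
        exact this.symm
      apply hne
      have hj' : σ i j = ∑ k : ↥K, α k * σ ↑k j :=
        hval ⟨j, Finset.mem_insert_self _ _⟩
      have hks : ∀ k' ∈ K, σ i k' = ∑ k : ↥K, α k * σ ↑k k' := fun k' h =>
        hval ⟨k', Finset.mem_insert_of_mem h⟩
      calc σ i j = ∑ k : ↥K, α k * σ ↑k j := hj'
        _ = ∑ k : ↥K, α k * (∑ k' ∈ K, σ ↑k k' * lam k') := by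
            refine Finset.sum_congr rfl fun k _ => ?_
            have := hk0 ↑k k.2
            have : σ ↑k j = ∑ k' ∈ K, σ ↑k k' * lam k' := by linarith
            rw [this]
        _ = ∑ k' ∈ K, σ i k' * lam k' := by
            simp_rw [Finset.mul_sum]
            rw [Finset.sum_comm]
            refine Finset.sum_congr rfl fun k' hk' => ?_
            rw [hks k' hk', Finset.sum_mul]
            exact Finset.sum_congr rfl fun k _ => by ring
    -- (3) contradiction
    have h3 : finrank ℝ ↥W < A.rank := by
      have hWle : W ⊔ span ℝ {rowi} ≤ span ℝ (Set.range (A : ↥Ki → ↥Kj → ℝ)) := by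
        refine sup_le ?_ ?_
        · rw [Submodule.span_le]
          rintro _ ⟨k, rfl⟩
          exact Submodule.subset_span ⟨⟨↑k, Finset.mem_insert_of_mem k.2⟩, rfl⟩
        · rw [Submodule.span_le, Set.singleton_subset_iff]
          exact Submodule.subset_span ⟨⟨i, Finset.mem_insert_self _ _⟩, rfl⟩
      have hlt : W < W ⊔ span ℝ {rowi} := by
        refine lt_of_le_of_ne le_sup_left (fun h => h2 ?_)
        rw [h]
        exact Submodule.mem_sup_right (Submodule.mem_span_singleton_self rowi)
      calc finrank ℝ ↥W < finrank ℝ ↥(W ⊔ span ℝ {rowi}) :=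
            Submodule.finrank_lt_finrank_of_lt hlt
        _ ≤ finrank ℝ ↥(span ℝ (Set.range (A : ↥Ki → ↥Kj → ℝ))) := Submodule.finrank_mono hWle
        _ = A.rank := (rank_eq_finrank_span_rows A).symm
    have := lt_of_le_of_lt h1 h3
    rw [hrank] at this
    exact lt_irrefl _ this

lemma exists_decomp {n : ℕ} (E : Fin n → Fin n → Prop) [DecidableRel E]
    {σ : Matrix (Fin n) (Fin n) ℝ} (hσ : σ ∈ locSet E) :
    ∃ Λ : Matrix (Fin n) (Fin n) ℝ, (∀ k j, ¬ E k j → Λ k j = 0) ∧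
      ∀ i j : Fin n, i < j → σ i j = ∑ k, σ i k * Λ k j := by
  classical
  choose lam hsupp hrec using fun j : Fin n =>
    exists_lambda E hσ.1 j (fun i hij hEij => hσ.2 i j hij hEij)
  refine ⟨fun k j => lam j k, fun k j hkj => hsupp j k (by simp [parents, hkj]), ?_⟩
  intro i j hij
  rw [hrec j i hij]
  exact Finset.sum_subset (Finset.subset_univ _)
    (fun k _ hk => by rw [hsupp j k hk, mul_zero])

lemma posDef_smul {m : Type*} [Fintype m] {X : Matrix m m ℝ} (hX : X.PosDef) {ε : ℝ}
    (hε : 0 < ε) : (ε • X).PosDef := by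
  refine Matrix.PosDef.of_dotProduct_mulVec_pos ?_ fun x hx => ?_
  · show (ε • X)ᴴ = ε • X
    rw [Matrix.conjTranspose_smul, hX.1]
    simp
  · rw [Matrix.smul_mulVec, dotProduct_smul, smul_eq_mul]
    exact mul_pos hε (hX.dotProduct_mulVec_pos hx)

end Prop3

open Prop3

/-- Proposition 3(b): `loc(G) ∩ Σ̂⁺⁺` is dense in `loc(G) ∩ Σ̂`: every matrix in `loc(G)` with
unit diagonal is a limit of positive definite matrices in `loc(G)` with unit diagonal. -/
theorem locSet_unitDiag_subset_closure_posDef {n : ℕ} (hn : 1 ≤ n)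
    (E : Fin n → Fin n → Prop) [DecidableRel E] (hE : ∀ i j, E i j → i < j) :
    locSet E ∩ {σ | ∀ i, σ i i = 1} ⊆
      closure (locSet E ∩ {σ | σ.PosDef} ∩ {σ | ∀ i, σ i i = 1}) := by
  rintro σ ⟨hloc, hdiag⟩
  classical
  obtain ⟨Λ, hΛsupp, hΛrec⟩ := exists_decomp E hloc
  have hΛlt : ∀ k j : Fin n, ¬ k < j → Λ k j = 0 := fun k j h =>
    hΛsupp k j (fun hE' => h (hE k j hE'))
  set T : Matrix (Fin n) (Fin n) ℝ := 1 - Λ with hT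
  have hTut : T.BlockTriangular id := by
    intro a b hba
    rw [hT]
    have h1 : (1 : Matrix (Fin n) (Fin n) ℝ) a b = 0 :=
      Matrix.one_apply_ne (fun h => absurd (h ▸ hba) (lt_irrefl _))
    have h2 : Λ a b = 0 := hΛlt a b (fun h => absurd (h.trans hba) (lt_irrefl _))
    simp [Matrix.sub_apply, h1, h2]
  have hTdiag : ∀ a, T a a = 1 := by
    intro a
    simp [hT, Matrix.sub_apply, Matrix.one_apply, hΛlt a a (lt_irrefl a)]
  have hTdet : IsUnit T.det := by
    rw [Matrix.det_of_upperTriangular hTut]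
    simp [hTdiag]
  have hTinv : Invertible T := T.invertibleOfIsUnitDet hTdet
  have hTiut : T⁻¹.BlockTriangular id := Matrix.blockTriangular_inv_of_blockTriangular hTut
  set C : Matrix (Fin n) (Fin n) ℝ := (T⁻¹)ᵀ * T⁻¹ with hC
  have hCpd : C.PosDef := posDef_transpose_mul_self T⁻¹ (T.isUnit_nonsing_inv_det hTdet)
  have hCrec : ∀ a j : Fin n, a < j → C a j = ∑ k, C a k * Λ k j := by
    intro a j haj
    have h0 : (C * T) a j = (T⁻¹)ᵀ a j := by
      rw [hC, Matrix.mul_assoc, Matrix.nonsing_inv_mul T hTdet, Matrix.mul_one]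
    have h1 : (T⁻¹)ᵀ a j = 0 := by
      rw [Matrix.transpose_apply]
      exact hTiut (show (id a : Fin n) < id j from haj)
    have h2 : (C * T) a j = C a j - ∑ k, C a k * Λ k j := by
      rw [hT, Matrix.mul_sub, Matrix.mul_one, Matrix.sub_apply, Matrix.mul_apply]
    have h3 : C a j - ∑ k, C a k * Λ k j = 0 := h2.symm.trans (h0.trans h1)
    linarith
  -- the perturbed family
  set X : ℝ → Matrix (Fin n) (Fin n) ℝ := fun ε => σ + ε • C with hX
  have hXdiag : ∀ ε (a : Fin n), X ε a a = 1 + ε * C a a := by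
    intro ε a
    simp [hX, Matrix.add_apply, Matrix.smul_apply, hdiag a, smul_eq_mul]
  have hXpd : ∀ ε : ℝ, 0 < ε → (X ε).PosDef := fun ε hε =>
    Matrix.PosDef.posSemidef_add hloc.1 (posDef_smul hCpd hε)
  set d : ℝ → Fin n → ℝ := fun ε a => (Real.sqrt (X ε a a))⁻¹ with hd
  set F : ℝ → Matrix (Fin n) (Fin n) ℝ :=
    fun ε => diagonal (d ε) * X ε * diagonal (d ε) with hF
  have hFapp : ∀ ε (a b : Fin n), F ε a b = d ε a * X ε a b * d ε b := by
    intro ε a b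
    show (diagonal (d ε) * X ε * diagonal (d ε)) a b = _
    rw [Matrix.mul_diagonal, Matrix.diagonal_mul]
  have hdpos : ∀ ε : ℝ, 0 < ε → ∀ a, 0 < d ε a := by
    intro ε hε a
    exact inv_pos.mpr (Real.sqrt_pos.mpr (posDef_diag_pos (hXpd ε hε) a))
  have hds : ∀ ε : ℝ, 0 < ε → ∀ a, d ε a * Real.sqrt (X ε a a) = 1 := by
    intro ε hε a
    exact inv_mul_cancel₀ (Real.sqrt_pos.mpr (posDef_diag_pos (hXpd ε hε) a)).ne'
  -- membership of F ε in the target set for ε > 0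
  have hmem : ∀ ε : ℝ, 0 < ε →
      F ε ∈ locSet E ∩ {σ | σ.PosDef} ∩ {σ | ∀ i, σ i i = 1} := by
    intro ε hε
    have hXa : ∀ a, 0 < X ε a a := posDef_diag_pos (hXpd ε hε)
    have hFpd : (F ε).PosDef := by
      have hdet : IsUnit (diagonal (d ε)).det := by
        rw [Matrix.det_diagonal]
        exact isUnit_iff_ne_zero.mpr
          (Finset.prod_ne_zero_iff.mpr fun a _ => (hdpos ε hε a).ne')
      have := posDef_conj (hXpd ε hε) (diagonal (d ε)) hdet
      rwa [Matrix.diagonal_transpose] at this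
    have hFdiag : ∀ a, F ε a a = 1 := by
      intro a
      rw [hFapp]
      have hs : Real.sqrt (X ε a a) * Real.sqrt (X ε a a) = X ε a a :=
        Real.mul_self_sqrt (hXa a).le
      have hne : Real.sqrt (X ε a a) ≠ 0 := (Real.sqrt_pos.mpr (hXa a)).ne'
      show (Real.sqrt (X ε a a))⁻¹ * X ε a a * (Real.sqrt (X ε a a))⁻¹ = 1
      field_simp
      exact (Real.sq_sqrt (hXa a).le).symm
    refine ⟨⟨?_, hFpd⟩, hFdiag⟩
    -- locSet membership via the recursion
    set Λ' : Matrix (Fin n) (Fin n) ℝ :=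
      fun k j => Real.sqrt (X ε k k) * Λ k j * d ε j with hΛ'
    have hΛ'supp : ∀ k j, ¬ E k j → Λ' k j = 0 := by
      intro k j h
      have h1 : Λ' k j = Real.sqrt (X ε k k) * Λ k j * d ε j := rfl
      rw [h1, hΛsupp k j h]
      ring
    have hXrec : ∀ a j : Fin n, a < j → X ε a j = ∑ k, X ε a k * Λ k j := by
      intro a j haj
      have h1 := hΛrec a j haj
      have h2 := hCrec a j haj
      have : X ε a j = σ a j + ε * C a j := by
        simp [hX, Matrix.add_apply, Matrix.smul_apply, smul_eq_mul]
      rw [this, h1, h2, Finset.mul_sum, ← Finset.sum_add_distrib]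
      refine Finset.sum_congr rfl fun k _ => ?_
      have : X ε a k = σ a k + ε * C a k := by
        simp [hX, Matrix.add_apply, Matrix.smul_apply, smul_eq_mul]
      rw [this]
      ring
    have hFrec : ∀ a j : Fin n, a < j → F ε a j = ∑ k, F ε a k * Λ' k j := by
      intro a j haj
      have hterm : ∀ k, F ε a k * Λ' k j = d ε a * (X ε a k * Λ k j) * d ε j := by
        intro k
        have h1 : Λ' k j = Real.sqrt (X ε k k) * Λ k j * d ε j := rfl
        rw [hFapp, h1]
        have hk := hds ε hε k
        calc d ε a * X ε a k * d ε k * (Real.sqrt (X ε k k) * Λ k j * d ε j)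
            = d ε a * (X ε a k * Λ k j) * d ε j * (d ε k * Real.sqrt (X ε k k)) := by ring
          _ = d ε a * (X ε a k * Λ k j) * d ε j := by rw [hk, mul_one]
      simp_rw [hterm]
      rw [hFapp, hXrec a j haj, Finset.mul_sum, Finset.sum_mul]
    exact mem_locSet_of_rec E hE hFpd hΛ'supp hFrec
  -- convergence
  have htend : Filter.Tendsto F (nhdsWithin 0 (Set.Ioi 0)) (nhds σ) := by
    have hcont : ∀ a b : Fin n,
        Filter.Tendsto (fun ε => F ε a b) (nhds 0) (nhds (σ a b)) := by
      intro a b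
      have hXc : ∀ (u v : Fin n), Continuous (fun ε : ℝ => X ε u v) := by
        intro u v
        have : (fun ε : ℝ => X ε u v) = fun ε => σ u v + ε * C u v := by
          funext ε
          simp [hX, Matrix.add_apply, Matrix.smul_apply, smul_eq_mul]
        rw [this]
        continuity
      have hdc : ∀ u : Fin n, Filter.Tendsto (fun ε : ℝ => d ε u) (nhds 0) (nhds 1) := by
        intro u
        have h0 : X 0 u u = 1 := by
          rw [hXdiag]
          ring
        have h1 : Filter.Tendsto (fun ε : ℝ => Real.sqrt (X ε u u)) (nhds 0) (nhds 1) := by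
          have := (Real.continuous_sqrt.comp (hXc u u)).tendsto 0
          simpa [h0, Function.comp_def] using this
        have := (h1.inv₀ one_ne_zero)
        simpa using this
      have hXt : Filter.Tendsto (fun ε : ℝ => X ε a b) (nhds 0) (nhds (σ a b)) := by
        have := (hXc a b).tendsto 0
        simpa [hX] using this
      have := ((hdc a).mul hXt).mul (hdc b)
      simp only [one_mul, mul_one] at this
      have heq : (fun ε => F ε a b) = fun ε => d ε a * X ε a b * d ε b := by
        funext ε; exact hFapp ε a b
      rw [heq]
      exact this
    have htend0 : Filter.Tendsto F (nhds 0) (nhds σ) := by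
      apply tendsto_pi_nhds.mpr
      intro a
      rw [tendsto_pi_nhds]
      intro b
      exact hcont a b
    exact htend0.mono_left nhdsWithin_le_nhds
  exact mem_closure_of_tendsto htend
    (eventually_nhdsWithin_of_forall fun ε hε => hmem ε hε)
end
end

section
/- Let G be a topologically sorted DAG on n nodes. A real symmetric positive semidefinite n × n matrix σ belongs to loc(G) if and only if there exist a real matrix A : Matrix (Fin n) (Fin n) ℝ with A i j = 0 unless E j i (so A is strictly lower triangular and supported on the edges of G) and a vector ω : Fin n → ℝ such that σ = (1 − A)⁻¹ * Matrix.diagonal (fun i => ω i ^ 2) * ((1 − A)⁻¹)ᵀ (note 1 − A is invertible since A is strictly lower triangular). -/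
open Matrix

noncomputable section

namespace LocAux

lemma rank_submatrix_row_le {α l m : Type*} [Fintype α] [Fintype l] [Fintype m] [DecidableEq l]
    (M : Matrix l m ℝ) (f : α → l) :
    (M.submatrix f id).rank ≤ M.rank := by
  have h : M.submatrix f id = ((1 : Matrix l l ℝ).submatrix f id) * M := by
    ext a b
    simp [Matrix.mul_apply, Matrix.one_apply]
  rw [h]
  exact Matrix.rank_mul_le_right _ _

variable {n : ℕ} {σ : Matrix (Fin n) (Fin n) ℝ}

open scoped MatrixOrder

lemma subRank_mono_rows {R R' C : Finset (Fin n)} (h : R ⊆ R') :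
    subRank σ R C ≤ subRank σ R' C := by
  have he : (σ.submatrix (fun a : R => (a : Fin n)) (fun b : C => (b : Fin n))) =
      (σ.submatrix (fun a : R' => (a : Fin n)) (fun b : C => (b : Fin n))).submatrix
        (fun a : R => (⟨a, h a.2⟩ : R')) id := rfl
  rw [subRank, he]
  exact rank_submatrix_row_le _ _

lemma subRank_le_diag (hσ : σ.PosSemidef) (R K : Finset (Fin n)) :
    subRank σ R K ≤ subRank σ K K := by
  set S := CFC.sqrt σ with hSdef
  have hS : S * S = σ := CFC.sqrt_mul_sqrt_self σ hσ.nonneg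
  have hSt : Sᵀ = S := by
    have := (CFC.sqrt_nonneg σ).posSemidef.1
    simpa [Matrix.IsHermitian, conjTranspose_eq_transpose_of_trivial] using this
  have hfac : σ.submatrix (fun a : R => (a : Fin n)) (fun b : K => (b : Fin n)) =
      (S.submatrix (fun a : R => (a : Fin n)) id) * (S.submatrix id (fun b : K => (b : Fin n))) := by
    ext a b
    simp [Matrix.mul_apply, ← hS]
  have hfac2 : σ.submatrix (fun a : K => (a : Fin n)) (fun b : K => (b : Fin n)) =
      (S.submatrix id (fun b : K => (b : Fin n)))ᵀ * (S.submatrix id (fun b : K => (b : Fin n))) := by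
    ext a b
    have h2 : ∀ t, S t (a : Fin n) = S (a : Fin n) t := fun t =>
      (congrFun (congrFun hSt t) (a : Fin n)).symm
    simp [Matrix.mul_apply, ← hS, Matrix.transpose_apply, h2]
  rw [subRank, subRank, hfac, hfac2, Matrix.rank_transpose_mul_self]
  exact Matrix.rank_mul_le_right _ _

lemma subRank_eq_diag (hσ : σ.PosSemidef) {R K : Finset (Fin n)} (h : K ⊆ R) :
    subRank σ R K = subRank σ K K :=
  le_antisymm (subRank_le_diag hσ R K) (subRank_mono_rows h)

lemma subRank_eq_finrank (σ : Matrix (Fin n) (Fin n) ℝ) (R C : Finset (Fin n)) :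
    subRank σ R C = Module.finrank ℝ
      (Submodule.span ℝ (Set.range (fun b : C => fun a : R => σ a b))) := by
  rw [subRank, Matrix.rank_eq_finrank_span_cols]
  rfl

lemma subRank_insert_col_eq {R K : Finset (Fin n)} {j : Fin n} (c : K → ℝ)
    (h : ∀ ρ : R, σ ρ j = ∑ k : K, c k * σ ρ k) :
    subRank σ R (insert j K) = subRank σ R K := by
  classical
  have hspan : Submodule.span ℝ
        (Set.range (fun b : (insert j K : Finset (Fin n)) => fun a : R => σ a b)) =
      Submodule.span ℝ (Set.range (fun k : K => fun a : R => σ a k)) := by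
    apply le_antisymm
    · rw [Submodule.span_le]
      rintro _ ⟨b, rfl⟩
      simp only [SetLike.mem_coe]
      show (fun a : R => σ (a : Fin n) (b : Fin n)) ∈
        Submodule.span ℝ (Set.range fun k : K => fun a : R => σ (a : Fin n) (k : Fin n))
      rcases Finset.mem_insert.mp b.2 with hb | hb
      · have hcol : (fun a : R => σ a b) = ∑ k : K, c k • (fun a : R => σ a (k : Fin n)) := by
          funext ρ
          simp only [Finset.sum_apply, Pi.smul_apply, smul_eq_mul]
          rw [show (b : Fin n) = j from hb]
          exact h ρ
        rw [hcol]
        exact Submodule.sum_mem _ fun k _ =>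
          Submodule.smul_mem _ _ (Submodule.subset_span ⟨k, rfl⟩)
      · exact Submodule.subset_span ⟨⟨b, hb⟩, rfl⟩
    · apply Submodule.span_mono
      rintro _ ⟨k, rfl⟩
      exact ⟨⟨k, Finset.mem_insert_of_mem k.2⟩, rfl⟩
  rw [subRank_eq_finrank, subRank_eq_finrank, hspan]

lemma exists_col_comb {R K : Finset (Fin n)} {j : Fin n}
    (hrank : subRank σ R (insert j K) = subRank σ R K) :
    ∃ lam : K → ℝ, ∀ ρ : R, σ ρ j = ∑ k : K, lam k * σ ρ k := by
  classical
  set pK := Submodule.span ℝ (Set.range (fun k : K => fun a : R => σ a k)) with hpK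
  set pC := Submodule.span ℝ
      (Set.range (fun b : (insert j K : Finset (Fin n)) => fun a : R => σ a b)) with hpC
  have hle : pK ≤ pC := by
    apply Submodule.span_mono
    rintro _ ⟨k, rfl⟩
    exact ⟨⟨k, Finset.mem_insert_of_mem k.2⟩, rfl⟩
  have hfr : Module.finrank ℝ pC ≤ Module.finrank ℝ pK := by
    rw [← subRank_eq_finrank, ← subRank_eq_finrank]
    exact le_of_eq hrank
  have heq : pK = pC := Submodule.eq_of_le_of_finrank_le hle hfr
  have hmem : (fun a : R => σ a j) ∈ pC :=
    Submodule.subset_span ⟨⟨j, Finset.mem_insert_self j K⟩, rfl⟩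
  rw [← heq, hpK] at hmem
  obtain ⟨lam, hlam⟩ := (Submodule.mem_span_range_iff_exists_fun ℝ).mp hmem
  refine ⟨lam, fun ρ => ?_⟩
  have := congrFun hlam ρ
  simp only [Finset.sum_apply, Pi.smul_apply, smul_eq_mul] at this
  exact this.symm

lemma psd_zero_extend (hσ : σ.PosSemidef) {K : Finset (Fin n)} (lam : K → ℝ)
    (h0 : ∀ k : K, ∑ k' : K, σ k k' * lam k' = 0) :
    ∀ m : Fin n, ∑ k' : K, σ m k' * lam k' = 0 := by
  classical
  set S := CFC.sqrt σ with hSdef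
  have hS : S * S = σ := CFC.sqrt_mul_sqrt_self σ hσ.nonneg
  have hSt : Sᵀ = S := by
    have := (CFC.sqrt_nonneg σ).posSemidef.1
    simpa [Matrix.IsHermitian, conjTranspose_eq_transpose_of_trivial] using this
  set B : Matrix (Fin n) K ℝ := S.submatrix id (fun b : K => (b : Fin n)) with hB
  have hsub : σ.submatrix (fun a : K => (a : Fin n)) (fun b : K => (b : Fin n)) = Bᵀ * B := by
    ext a b
    have h2 : ∀ t, S t (a : Fin n) = S (a : Fin n) t := fun t =>
      (congrFun (congrFun hSt t) (a : Fin n)).symm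
    simp [hB, Matrix.mul_apply, ← hS, h2]
  have h1 : (Bᵀ * B) *ᵥ lam = 0 := by
    rw [← hsub]
    funext k
    exact h0 k
  have h2 : (B *ᵥ lam) ⬝ᵥ (B *ᵥ lam) = 0 := by
    have h3 : lam ⬝ᵥ ((Bᵀ * B) *ᵥ lam) = 0 := by rw [h1, dotProduct_zero]
    rw [← Matrix.mulVec_mulVec, Matrix.dotProduct_mulVec, Matrix.vecMul_transpose] at h3
    exact h3
  have h4 : B *ᵥ lam = 0 := dotProduct_self_eq_zero.mp h2
  intro m
  have hfac : σ.submatrix id (fun b : K => (b : Fin n)) = S * B := by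
    ext a b
    simp [hB, Matrix.mul_apply, ← hS]
  have h5 : (σ.submatrix id (fun b : K => (b : Fin n))) *ᵥ lam = 0 := by
    rw [hfac, ← Matrix.mulVec_mulVec, h4, Matrix.mulVec_zero]
  exact congrFun h5 m

lemma exists_reg (hσ : σ.PosSemidef) (K : Finset (Fin n)) (j : Fin n) :
    ∃ a : K → ℝ, ∀ k : K, ∑ k' : K, σ k k' * a k' = σ k j := by
  classical
  set S := CFC.sqrt σ with hSdef
  have hS : S * S = σ := CFC.sqrt_mul_sqrt_self σ hσ.nonneg
  have hSt : Sᵀ = S := by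
    have := (CFC.sqrt_nonneg σ).posSemidef.1
    simpa [Matrix.IsHermitian, conjTranspose_eq_transpose_of_trivial] using this
  set B : Matrix (Fin n) K ℝ := S.submatrix id (fun b : K => (b : Fin n)) with hB
  have hsub : σ.submatrix (fun a : K => (a : Fin n)) (fun b : K => (b : Fin n)) = Bᵀ * B := by
    ext a b
    have h2 : ∀ t, S t (a : Fin n) = S (a : Fin n) t := fun t =>
      (congrFun (congrFun hSt t) (a : Fin n)).symm
    simp [hB, Matrix.mul_apply, ← hS, h2]
  have hle : LinearMap.range (Bᵀ * B).mulVecLin ≤ LinearMap.range Bᵀ.mulVecLin := by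
    rintro _ ⟨v, rfl⟩
    exact ⟨B *ᵥ v, by simp [Matrix.mulVecLin_apply, Matrix.mulVec_mulVec]⟩
  have hfr : Module.finrank ℝ (LinearMap.range Bᵀ.mulVecLin) ≤
      Module.finrank ℝ (LinearMap.range (Bᵀ * B).mulVecLin) := by
    have e1 : Module.finrank ℝ (LinearMap.range Bᵀ.mulVecLin) = Bᵀ.rank := rfl
    have e2 : Module.finrank ℝ (LinearMap.range (Bᵀ * B).mulVecLin) = (Bᵀ * B).rank := rfl
    rw [e1, e2, Matrix.rank_transpose_mul_self, Matrix.rank_transpose]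
  have heq := Submodule.eq_of_le_of_finrank_le hle hfr
  have hmem : (fun k : K => σ k j) ∈ LinearMap.range Bᵀ.mulVecLin := by
    refine ⟨fun t => S t j, ?_⟩
    funext k
    have h2 : ∀ t, S t (k : Fin n) = S (k : Fin n) t := fun t =>
      (congrFun (congrFun hSt t) (k : Fin n)).symm
    simp [Matrix.mulVecLin_apply, Matrix.mulVec, dotProduct, hB, ← hS,
      Matrix.mul_apply, h2]
  rw [← heq] at hmem
  obtain ⟨a, ha⟩ := hmem
  refine ⟨a, fun k => ?_⟩
  have := congrFun ha k
  simp only [Matrix.mulVecLin_apply] at this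
  rw [← hsub] at this
  exact this

lemma blockTri {E : Fin n → Fin n → Prop} (hE : ∀ i j, E i j → i < j)
    {A : Matrix (Fin n) (Fin n) ℝ} (hA0 : ∀ p q, ¬ E q p → A p q = 0) :
    ((1 : Matrix (Fin n) (Fin n) ℝ) - A).BlockTriangular OrderDual.toDual := by
  intro p q hpq
  have hpq' : p < q := hpq
  have hAz : A p q = 0 := hA0 p q (fun h => absurd (hE q p h) (by omega))
  simp [Matrix.sub_apply, Matrix.one_apply, hpq'.ne, hAz]

lemma detUnit {E : Fin n → Fin n → Prop} (hE : ∀ i j, E i j → i < j)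
    {A : Matrix (Fin n) (Fin n) ℝ} (hA0 : ∀ p q, ¬ E q p → A p q = 0) :
    IsUnit ((1 : Matrix (Fin n) (Fin n) ℝ) - A).det := by
  have hdet : ((1 : Matrix (Fin n) (Fin n) ℝ) - A).det = 1 := by
    rw [Matrix.det_of_lowerTriangular _ (blockTri hE hA0)]
    apply Finset.prod_eq_one
    intro p _
    have hAz : A p p = 0 := hA0 p p (fun h => lt_irrefl p (hE p p h))
    simp [Matrix.sub_apply, Matrix.one_apply, hAz]
  rw [hdet]; exact isUnit_one

end LocAux

/-- Remark after Proposition 3: `loc(G) = Im f_G ∩ Σ⁺`, i.e. a real symmetric positive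
semidefinite matrix belongs to `loc(G)` iff it has the trek-rule parametrization
`σ = (I − A)⁻¹ Ω² (I − A)⁻ᵀ` with `A` supported on the edges of `G`. -/
theorem mem_locSet_iff_param {n : ℕ} (hn : 1 ≤ n)
    (E : Fin n → Fin n → Prop) [DecidableRel E] (hE : ∀ i j, E i j → i < j)
    (σ : Matrix (Fin n) (Fin n) ℝ) (hσ : σ.PosSemidef) :
    σ ∈ locSet E ↔
      ∃ (A : Matrix (Fin n) (Fin n) ℝ) (ω : Fin n → ℝ),
        (∀ i j, ¬ E j i → A i j = 0) ∧
        σ = (1 - A)⁻¹ * Matrix.diagonal (fun i => ω i ^ 2) * ((1 - A)⁻¹)ᵀ := by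
  classical
  have hKmem : ∀ j k : Fin n, k ∈ parents E j ↔ E k j := fun j k => by
    simp [parents]
  constructor
  · rintro ⟨-, hrank⟩
    choose a ha using fun j => LocAux.exists_reg hσ (parents E j) j
    set A : Matrix (Fin n) (Fin n) ℝ :=
      fun p q => if h : q ∈ parents E p then a p ⟨q, h⟩ else 0 with hA
    have hAval : ∀ (p q : Fin n) (h : q ∈ parents E p), A p q = a p ⟨q, h⟩ := by
      intro p q h; rw [hA]; exact dif_pos h
    have hA0 : ∀ p q, ¬ E q p → A p q = 0 := by
      intro p q h
      rw [hA]
      exact dif_neg (fun hm => h ((hKmem p q).mp hm))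
    -- the key regression claim
    have hclaimK : ∀ (j m : Fin n), m < j →
        σ m j = ∑ k : {x // x ∈ parents E j}, A j k * σ m k := by
      intro j m hm
      by_cases hmem : m ∈ parents E j
      · have h1 := ha j ⟨m, hmem⟩
        rw [← h1]
        refine Finset.sum_congr rfl fun k _ => ?_
        rw [hAval j k k.2]
        ring
      · have hEmj : ¬ E m j := fun h => hmem ((hKmem j m).mpr h)
        have hr2 : subRank σ (insert m (parents E j)) (parents E j) =
            subRank σ (parents E j) (parents E j) :=
          LocAux.subRank_eq_diag hσ (Finset.subset_insert m _)
        obtain ⟨lam, hlam⟩ := LocAux.exists_col_comb (σ := σ)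
          ((hrank m j hm hEmj).trans hr2.symm)
        set mu : {x // x ∈ parents E j} → ℝ := fun k => lam k - a j k with hmu
        have hmu0 : ∀ k : {x // x ∈ parents E j},
            ∑ k' : {x // x ∈ parents E j}, σ k k' * mu k' = 0 := by
          intro k
          have h1 := hlam ⟨(k : Fin n), Finset.mem_insert_of_mem k.2⟩
          have h2 := ha j k
          have e1 : ∑ k' : {x // x ∈ parents E j}, σ k k' * mu k' =
              (∑ k' : {x // x ∈ parents E j}, lam k' * σ k k') -
                ∑ k' : {x // x ∈ parents E j}, σ k k' * a j k' := by
            rw [← Finset.sum_sub_distrib]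
            refine Finset.sum_congr rfl fun k' _ => ?_
            simp only [hmu]
            ring
          rw [e1, h2, ← h1]
          exact sub_self _
        have hext := LocAux.psd_zero_extend hσ mu hmu0 m
        have h1 := hlam ⟨m, Finset.mem_insert_self m _⟩
        have e2 : ∑ k' : {x // x ∈ parents E j}, σ m k' * mu k' =
            (∑ k' : {x // x ∈ parents E j}, lam k' * σ m k') -
              ∑ k' : {x // x ∈ parents E j}, A j k' * σ m k' := by
          rw [← Finset.sum_sub_distrib]
          refine Finset.sum_congr rfl fun k' _ => ?_
          rw [hAval j k' k'.2]
          simp only [hmu]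
          ring
        rw [e2] at hext
        rw [h1, ← sub_eq_zero]
        exact hext
    -- extend to a sum over all of Fin n
    have hclaim : ∀ (j m : Fin n), m < j → σ m j = ∑ k : Fin n, A j k * σ m k := by
      intro j m hm
      rw [hclaimK j m hm]
      have e1 : ∑ k : {x // x ∈ parents E j}, A j (k : Fin n) * σ m (k : Fin n) =
          ∑ k ∈ parents E j, A j k * σ m k := Finset.sum_coe_sort (parents E j) (fun k => A j k * σ m k)
      have e2 : ∑ k ∈ parents E j, A j k * σ m k = ∑ k : Fin n, A j k * σ m k :=
        Finset.sum_subset (Finset.subset_univ _) (fun x _ hx => by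
          rw [hA0 j x (fun h => hx ((hKmem j x).mpr h)), zero_mul])
      rw [e1, e2]
    -- triangularity and invertibility
    have hunit := LocAux.detUnit hE hA0
    have hAupper : ∀ p q : Fin n, p ≤ q → A p q = 0 := fun p q hpq =>
      hA0 p q (fun h => absurd (hE q p h) (not_lt.mpr hpq))
    have hu_upper : ∀ p q : Fin n, p < q → ((1 : Matrix (Fin n) (Fin n) ℝ) - A) p q = 0 := by
      intro p q h
      simp [Matrix.sub_apply, Matrix.one_apply, h.ne, hAupper p q h.le]
    set D : Matrix (Fin n) (Fin n) ℝ := (1 - A) * σ * (1 - A)ᵀ with hDdef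
    set w : Fin n → Fin n → ℝ :=
      fun j mm => ∑ k, σ mm k * ((1 : Matrix (Fin n) (Fin n) ℝ) - A) j k with hwdef
    have hw0 : ∀ j mm : Fin n, mm < j → w j mm = 0 := by
      intro j mm h
      have e0 : w j mm = σ mm j - ∑ k, σ mm k * A j k := by
        rw [hwdef]
        simp only [Matrix.sub_apply, Matrix.one_apply, mul_sub, Finset.sum_sub_distrib,
          mul_ite, mul_one, mul_zero]
        congr 1
        simp
      rw [e0, hclaim j mm h, sub_eq_zero]
      exact Finset.sum_congr rfl fun k _ => mul_comm _ _
    have hD : ∀ p q : Fin n, D p q = ∑ m, ((1 : Matrix (Fin n) (Fin n) ℝ) - A) p m * w q m := by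
      intro p q
      rw [hDdef]
      calc (((1 - A) * σ * (1 - A)ᵀ : Matrix (Fin n) (Fin n) ℝ)) p q
          = ∑ m', (∑ m, ((1 : Matrix (Fin n) (Fin n) ℝ) - A) p m * σ m m') *
              ((1 : Matrix (Fin n) (Fin n) ℝ) - A) q m' := by
            simp only [Matrix.mul_apply, Matrix.transpose_apply]
        _ = ∑ m', ∑ m, ((1 : Matrix (Fin n) (Fin n) ℝ) - A) p m *
              (σ m m' * ((1 : Matrix (Fin n) (Fin n) ℝ) - A) q m') := by
            refine Finset.sum_congr rfl fun m' _ => ?_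
            rw [Finset.sum_mul]
            exact Finset.sum_congr rfl fun m _ => by ring
        _ = ∑ m, ∑ m', ((1 : Matrix (Fin n) (Fin n) ℝ) - A) p m *
              (σ m m' * ((1 : Matrix (Fin n) (Fin n) ℝ) - A) q m') := Finset.sum_comm
        _ = ∑ m, ((1 : Matrix (Fin n) (Fin n) ℝ) - A) p m * w q m := by
            refine Finset.sum_congr rfl fun m _ => ?_
            rw [hwdef, Finset.mul_sum]
    have hσsym : σᵀ = σ := by
      have := hσ.1
      simpa [Matrix.IsHermitian, conjTranspose_eq_transpose_of_trivial] using this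
    have hDT : Dᵀ = D := by
      rw [hDdef, Matrix.transpose_mul, Matrix.transpose_mul, Matrix.transpose_transpose,
        hσsym, Matrix.mul_assoc]
    have hDsymm : ∀ p q : Fin n, D p q = D q p := fun p q =>
      congrFun (congrFun hDT q) p
    have hDeq0 : ∀ p q : Fin n, p ≠ q → D p q = 0 := by
      have hlt : ∀ p q : Fin n, p < q → D p q = 0 := by
        intro p q h
        rw [hD]
        refine Finset.sum_eq_zero fun m _ => ?_
        rcases lt_or_ge m q with h2 | h2
        · rw [hw0 q m h2, mul_zero]
        · rw [hu_upper p m (lt_of_lt_of_le h h2), zero_mul]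
      intro p q h
      rcases lt_or_gt_of_ne h with h2 | h2
      · exact hlt p q h2
      · rw [hDsymm]; exact hlt q p h2
    have hDnn : ∀ p : Fin n, 0 ≤ D p p := by
      intro p
      have e0 : D p p = (fun mm => ((1 : Matrix (Fin n) (Fin n) ℝ) - A) p mm) ⬝ᵥ
          (σ *ᵥ (fun mm => ((1 : Matrix (Fin n) (Fin n) ℝ) - A) p mm)) := by
        rw [hD]
        simp only [dotProduct, Matrix.mulVec, dotProduct, hwdef]
      rw [e0]
      simpa using hσ.dotProduct_mulVec_nonneg (fun mm => ((1 : Matrix (Fin n) (Fin n) ℝ) - A) p mm)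
    have hdiag : D = Matrix.diagonal (fun p => D p p) := by
      ext p q
      by_cases h : p = q
      · subst h; rw [Matrix.diagonal_apply_eq]
      · rw [Matrix.diagonal_apply_ne _ h]; exact hDeq0 p q h
    refine ⟨A, fun p => Real.sqrt (D p p), hA0, ?_⟩
    have hds : Matrix.diagonal (fun p => Real.sqrt (D p p) ^ 2) =
        Matrix.diagonal (fun p => D p p) := by
      apply congrArg Matrix.diagonal
      funext p
      exact Real.sq_sqrt (hDnn p)
    rw [hds, ← hdiag, hDdef]
    have e1 : (1 - A)⁻¹ * ((1 - A) * σ * (1 - A)ᵀ) * ((1 - A)⁻¹)ᵀ =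
        ((1 - A)⁻¹ * (1 - A)) * σ * ((1 - A)ᵀ * ((1 - A)⁻¹)ᵀ) := by
      simp only [Matrix.mul_assoc]
    rw [e1, Matrix.nonsing_inv_mul _ hunit, ← Matrix.transpose_mul,
      Matrix.nonsing_inv_mul _ hunit, Matrix.transpose_one, Matrix.one_mul, Matrix.mul_one]
  · rintro ⟨A, ω, hA0, hσeq⟩
    refine ⟨hσ, fun i j hij hEij => ?_⟩
    have hunit := LocAux.detUnit hE hA0
    haveI := Matrix.invertibleOfIsUnitDet _ hunit
    have hLBT := Matrix.blockTriangular_inv_of_blockTriangular (LocAux.blockTri hE hA0)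
    have hL0 : ∀ p q : Fin n, p < q → (1 - A)⁻¹ p q = 0 := fun p q h => hLBT h
    have hmul : σ * (1 - A)ᵀ = (1 - A)⁻¹ * Matrix.diagonal (fun i => ω i ^ 2) := by
      rw [hσeq, Matrix.mul_assoc, ← Matrix.transpose_mul,
        Matrix.mul_nonsing_inv _ hunit, Matrix.transpose_one, Matrix.mul_one]
    have hkey : ∀ m : Fin n, m < j → σ m j = ∑ k : Fin n, A j k * σ m k := by
      intro m hm
      have hent := congrFun (congrFun hmul m) j
      have hlhs : ((σ * (1 - A)ᵀ : Matrix (Fin n) (Fin n) ℝ)) m j =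
          σ m j - ∑ k : Fin n, A j k * σ m k := by
        simp only [Matrix.mul_apply, Matrix.transpose_apply, Matrix.sub_apply,
          Matrix.one_apply, mul_sub, Finset.sum_sub_distrib, mul_ite, mul_one, mul_zero]
        congr 1
        · simp
        · exact Finset.sum_congr rfl fun k _ => mul_comm _ _
      have hrhs : ((1 - A)⁻¹ * Matrix.diagonal (fun i => ω i ^ 2)) m j = 0 := by
        rw [Matrix.mul_diagonal, hL0 m j hm, zero_mul]
      rw [hlhs, hrhs] at hent
      linarith [hent]
    have hikey : ∀ ρ : {x // x ∈ insert i (parents E j)},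
        σ ρ j = ∑ k : {x // x ∈ parents E j}, A j k * σ ρ k := by
      intro ρ
      have hρ : (ρ : Fin n) < j := by
        rcases Finset.mem_insert.mp ρ.2 with h | h
        · exact lt_of_le_of_lt (le_of_eq h) hij
        · exact hE _ _ ((hKmem j ρ).mp h)
      rw [hkey ρ hρ]
      have e1 : ∑ k : {x // x ∈ parents E j}, A j (k : Fin n) * σ ρ (k : Fin n) =
          ∑ k ∈ parents E j, A j k * σ ρ k := Finset.sum_coe_sort (parents E j) (fun k => A j k * σ ρ k)
      have e2 : ∑ k ∈ parents E j, A j k * σ ρ k = ∑ k : Fin n, A j k * σ ρ k :=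
        Finset.sum_subset (Finset.subset_univ _) (fun x _ hx => by
          rw [hA0 j x (fun h => hx ((hKmem j x).mpr h)), zero_mul])
      rw [e1, e2]
    have h1 := LocAux.subRank_insert_col_eq (σ := σ)
      (fun k : {x // x ∈ parents E j} => A j k) hikey
    rw [h1]
    exact LocAux.subRank_eq_diag hσ (Finset.subset_insert i _)
end
end

section
/- Let G be a topologically sorted DAG on n nodes. Then the saturation p_G of I_G at θ₀ equals the vanishing ideal of the image of the parametrization f_G: a polynomial f ∈ R belongs to p_G if and only if for every matrix A : Matrix (Fin n) (Fin n) ℂ with A i j = 0 unless E j i and every ω : Fin n → ℂ, f evaluates to 0 at the point of ℂ^{Sym2 (Fin n)} assigning to each unordered pair s(i,j) the (i,j) entry of (1 − A)⁻¹ * Matrix.diagonal (fun i => ω i ^ 2) * ((1 − A)⁻¹)ᵀ. -/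
open MvPolynomial Matrix

noncomputable section

/-- The minor of `M` with rows `A` and columns `B`, each listed in increasing order. -/
def fminor {n : ℕ} {R : Type*} [CommRing R] (M : Matrix (Fin n) (Fin n) R)
    (A B : Finset (Fin n)) (h : B.card = A.card) : R :=
  Matrix.det (Matrix.of fun k l : Fin A.card =>
    M (A.orderEmbOfFin rfl k) (B.orderEmbOfFin h l))

/-- The generic symmetric matrix, with `(i,j)` entry the variable indexed by the unordered
pair `s(i,j)`. -/
def genMat (n : ℕ) : Matrix (Fin n) (Fin n) (MvPolynomial (Sym2 (Fin n)) ℂ) :=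
  fun i j => X (Sym2.mk i j)

/-- The ideal of imposed relations `I_G`, generated by the minors `det M_{{i}∪K,{j}∪K}` over all
pairs `i < j` with `¬ E i j`, where `K = pa(j)`. -/
def impIdeal {n : ℕ} (E : Fin n → Fin n → Prop) [DecidableRel E] :
    Ideal (MvPolynomial (Sym2 (Fin n)) ℂ) :=
  Ideal.span { f | ∃ i j : Fin n, ∃ _ : i < j, ∃ _ : ¬ E i j,
    ∃ h : (insert j (parents E j)).card = (insert i (parents E j)).card,
      f = fminor (genMat n) (insert i (parents E j)) (insert j (parents E j)) h }

/-- The product `θ₀` of all principal minors of the generic symmetric matrix. -/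
def theta0 (n : ℕ) : MvPolynomial (Sym2 (Fin n)) ℂ :=
  ∏ A : Finset (Fin n), fminor (genMat n) A A rfl

/-- The saturation `{f | ∃ m, g ^ m * f ∈ I}` of an ideal `I` at an element `g`. -/
def satIdeal {R : Type*} [CommRing R] (I : Ideal R) (g : R) : Ideal R where
  carrier := {f | ∃ m : ℕ, g ^ m * f ∈ I}
  zero_mem' := ⟨0, by simp⟩
  add_mem' := by
    rintro a b ⟨ma, ha⟩ ⟨mb, hb⟩
    refine ⟨ma + mb, ?_⟩
    have h : g ^ (ma + mb) * (a + b) = g ^ mb * (g ^ ma * a) + g ^ ma * (g ^ mb * b) := by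
      ring
    rw [h]
    exact I.add_mem (I.mul_mem_left _ ha) (I.mul_mem_left _ hb)
  smul_mem' := by
    rintro c a ⟨m, hm⟩
    refine ⟨m, ?_⟩
    have h : g ^ m * (c • a) = c * (g ^ m * a) := by
      simp only [smul_eq_mul]; ring
    rw [h]
    exact I.mul_mem_left _ hm


/-- The saturation `p_G` of `I_G` at `θ₀`. -/
def satPG {n : ℕ} (E : Fin n → Fin n → Prop) [DecidableRel E] :
    Ideal (MvPolynomial (Sym2 (Fin n)) ℂ) :=
  satIdeal (impIdeal E) (theta0 n)


variable {n : ℕ} {S : Type*} [CommRing S]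

/-- strictly lower triangular -/
def SL (A : Matrix (Fin n) (Fin n) S) : Prop := ∀ i j : Fin n, ¬ j < i → A i j = 0

lemma SL.pow_apply {A : Matrix (Fin n) (Fin n) S} (hA : SL A) (k : ℕ) (i j : Fin n)
    (h : (A ^ k) i j ≠ 0) : (j : ℕ) + k ≤ (i : ℕ) := by
  induction k generalizing i j with
  | zero =>
    simp only [pow_zero] at h
    rcases eq_or_ne i j with rfl | hne
    · omega
    · exact absurd (Matrix.one_apply_ne hne) h
  | succ k ih =>
    rw [pow_succ, Matrix.mul_apply] at h
    obtain ⟨r, _, hr⟩ := Finset.exists_ne_zero_of_sum_ne_zero h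
    have h1 : (A ^ k) i r ≠ 0 := fun h0 => hr (by simp [h0])
    have h2 : A r j ≠ 0 := fun h0 => hr (by simp [h0])
    have := ih i r h1
    have : (j : ℕ) < (r : ℕ) := by
      by_contra hc
      exact h2 (hA r j (by omega))
    omega

lemma SL.pow_n {A : Matrix (Fin n) (Fin n) S} (hA : SL A) : A ^ n = 0 := by
  ext i j
  by_contra h
  have := hA.pow_apply n i j h
  omega

/-- explicit inverse of `1 - A` for strictly lower triangular `A` -/
def invL (A : Matrix (Fin n) (Fin n) S) : Matrix (Fin n) (Fin n) S :=
  ∑ k ∈ Finset.range n, A ^ k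

lemma one_sub_mul_invL {A : Matrix (Fin n) (Fin n) S} (hA : SL A) :
    (1 - A) * invL A = 1 := by
  have : (1 - A) * invL A = ∑ k ∈ Finset.range n, (A ^ k - A ^ (k + 1)) := by
    rw [invL, Finset.mul_sum]
    refine Finset.sum_congr rfl fun k _ => ?_
    rw [sub_mul, one_mul, pow_succ']
  rw [this, Finset.sum_range_sub', pow_zero, hA.pow_n, sub_zero]

lemma invL_mul_one_sub {A : Matrix (Fin n) (Fin n) S} (hA : SL A) :
    invL A * (1 - A) = 1 := by
  have : invL A * (1 - A) = ∑ k ∈ Finset.range n, (A ^ k - A ^ (k + 1)) := by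
    rw [invL, Finset.sum_mul]
    refine Finset.sum_congr rfl fun k _ => ?_
    rw [mul_sub, mul_one, pow_succ]
  rw [this, Finset.sum_range_sub', pow_zero, hA.pow_n, sub_zero]

lemma invL_apply_of_lt {A : Matrix (Fin n) (Fin n) S} (hA : SL A) {i j : Fin n}
    (hij : i < j) : invL A i j = 0 := by
  rw [invL, Matrix.sum_apply]
  refine Finset.sum_eq_zero fun k _ => ?_
  by_contra h
  have := hA.pow_apply k i j h
  have : (j : ℕ) ≤ (i : ℕ) := by omega
  exact absurd hij (by omega)

/-- the covariance matrix -/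
def Sigma' (A : Matrix (Fin n) (Fin n) S) (w : Fin n → S) : Matrix (Fin n) (Fin n) S :=
  invL A * Matrix.diagonal w * (invL A)ᵀ

lemma Sigma'_symm (A : Matrix (Fin n) (Fin n) S) (w : Fin n → S) (i j : Fin n) :
    Sigma' A w i j = Sigma' A w j i := by
  have : (Sigma' A w)ᵀ = Sigma' A w := by
    unfold Sigma'
    rw [Matrix.transpose_mul, Matrix.transpose_mul, Matrix.transpose_transpose,
      Matrix.diagonal_transpose, Matrix.mul_assoc]
  conv_lhs => rw [← this]
  rfl

lemma map_invL {T : Type*} [CommRing T] (f : S →+* T) (A : Matrix (Fin n) (Fin n) S) :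
    (invL A).map f = invL (A.map f) := by
  have h1 : (invL A).map f = f.mapMatrix (invL A) := rfl
  have h2 : A.map f = f.mapMatrix A := rfl
  rw [h1, h2, invL, invL, map_sum]
  exact Finset.sum_congr rfl fun k _ => by rw [map_pow]

lemma map_Sigma' {T : Type*} [CommRing T] (f : S →+* T) (A : Matrix (Fin n) (Fin n) S)
    (w : Fin n → S) :
    (Sigma' A w).map f = Sigma' (A.map f) (fun i => f (w i)) := by
  rw [Sigma', Sigma', Matrix.map_mul, Matrix.map_mul, Matrix.transpose_map, map_invL,
    Matrix.diagonal_map (map_zero f)]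

/-- the key column relation -/
lemma Sigma'_rel {A : Matrix (Fin n) (Fin n) S} (hA : SL A) (w : Fin n → S)
    {r j : Fin n} (hrj : r < j) :
    Sigma' A w r j = ∑ k, A j k * Sigma' A w r k := by
  have key : Sigma' A w * (1 - A)ᵀ = invL A * Matrix.diagonal w := by
    calc Sigma' A w * (1 - A)ᵀ
        = invL A * Matrix.diagonal w * ((invL A)ᵀ * (1 - A)ᵀ) := by
          rw [Sigma', Matrix.mul_assoc]
      _ = invL A * Matrix.diagonal w := by
          rw [← Matrix.transpose_mul, one_sub_mul_invL hA, Matrix.transpose_one, Matrix.mul_one]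
  have hkey := congrFun (congrFun key r) j
  rw [Matrix.mul_diagonal, invL_apply_of_lt hA hrj, zero_mul, Matrix.mul_apply] at hkey
  simp only [Matrix.transpose_apply, Matrix.sub_apply, Matrix.one_apply, mul_sub,
    mul_ite, mul_one, mul_zero] at hkey
  rw [Finset.sum_sub_distrib] at hkey
  simp only [Finset.sum_ite_eq, Finset.mem_univ, if_true] at hkey
  have hc : ∑ k, A j k * Sigma' A w r k = ∑ k, Sigma' A w r k * A j k :=
    Finset.sum_congr rfl fun k _ => mul_comm _ _
  rw [hc]
  linear_combination hkey


lemma sum_orderEmbOfFin {M : Type*} [AddCommMonoid M] (s : Finset (Fin n)) {k : ℕ}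
    (h : s.card = k) (F : Fin n → M) :
    ∑ c : Fin k, F (s.orderEmbOfFin h c) = ∑ y ∈ s, F y := by
  rw [← Finset.sum_coe_sort s F]
  exact Fintype.sum_equiv (s.orderIsoOfFin h).toEquiv _ _ (fun c => rfl)

lemma det_eq_zero_of_mulVec {ι : Type*} [Fintype ι] [DecidableEq ι] [IsDomain S]
    (N : Matrix ι ι S) (v : ι → S) (hv : v ≠ 0) (h : N *ᵥ v = 0) : N.det = 0 := by
  have h2 : N.det • v = 0 := by
    have := congrArg (fun u => N.adjugate *ᵥ u) h
    simpa [Matrix.mulVec_mulVec, Matrix.adjugate_mul, Matrix.smul_mulVec,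
      Matrix.one_mulVec] using this
  obtain ⟨i, hi⟩ := Function.ne_iff.mp hv
  have := congrFun h2 i
  simp only [Pi.smul_apply, smul_eq_mul, Pi.zero_apply] at this
  rcases mul_eq_zero.mp this with h | h
  · exact h
  · exact absurd h hi

/-- dets of submatrices over equal ranges agree up to a unit -/
lemma det_submatrix_range_eq {ι κ : Type*} [Fintype ι] [DecidableEq ι] [Fintype κ]
    [DecidableEq κ] (N : Matrix (Fin n) (Fin n) S) (f g : ι → Fin n) (f' g' : κ → Fin n)
    (hf : Function.Injective f) (hg : Function.Injective g)
    (hf' : Function.Injective f') (hg' : Function.Injective g')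
    (hfr : Set.range f = Set.range f') (hgr : Set.range g = Set.range g') :
    ∃ ε : S, IsUnit ε ∧ (N.submatrix f g).det = ε * (N.submatrix f' g').det := by
  let σ : ι ≃ κ :=
    (Equiv.ofInjective f hf).trans ((Equiv.setCongr hfr).trans (Equiv.ofInjective f' hf').symm)
  let τ : ι ≃ κ :=
    (Equiv.ofInjective g hg).trans ((Equiv.setCongr hgr).trans (Equiv.ofInjective g' hg').symm)
  have hσ : ∀ i, f' (σ i) = f i := by
    intro i
    show f' ((Equiv.ofInjective f' hf').symm _) = f i
    rw [Equiv.apply_ofInjective_symm hf']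
    rfl
  have hτ : ∀ i, g' (τ i) = g i := by
    intro i
    show g' ((Equiv.ofInjective g' hg').symm _) = g i
    rw [Equiv.apply_ofInjective_symm hg']
    rfl
  have key : N.submatrix f g = ((N.submatrix f' g').submatrix (τ.symm.trans σ) id).submatrix τ τ := by
    ext i j
    simp [Matrix.submatrix_apply, hσ, hτ]
  refine ⟨((Equiv.Perm.sign (τ.symm.trans σ) : ℤ) : S), ?_, ?_⟩
  · rcases Int.units_eq_one_or (Equiv.Perm.sign (τ.symm.trans σ)) with h | h <;>
      simp [h, IsUnit.neg_iff]
  · rw [key, Matrix.det_submatrix_equiv_self τ, Matrix.det_permute]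


lemma fminor_bordered (M : Matrix (Fin n) (Fin n) S) (K : Finset (Fin n)) (r j : Fin n)
    (hr : r ∉ K) (hj : j ∉ K) (hcard : (insert j K).card = (insert r K).card)
    (hG : IsUnit (M.submatrix (K.orderEmbOfFin rfl) (K.orderEmbOfFin rfl)).det) :
    ∃ ε : S, IsUnit ε ∧
      fminor M (insert r K) (insert j K) hcard =
        ε * ((M.submatrix (K.orderEmbOfFin rfl) (K.orderEmbOfFin rfl)).det *
          (M r j - ∑ k, M r (K.orderEmbOfFin rfl k) *
            (((M.submatrix (K.orderEmbOfFin rfl) (K.orderEmbOfFin rfl))⁻¹ *ᵥ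
              (fun l => M (K.orderEmbOfFin rfl l) j)) k))) := by
  classical
  set e := K.orderEmbOfFin rfl with he
  set G := M.submatrix e e with hGdef
  have heinj : Function.Injective e := e.injective
  set f' : Fin K.card ⊕ Unit → Fin n := Sum.elim e fun _ => r with hf'
  set g' : Fin K.card ⊕ Unit → Fin n := Sum.elim e fun _ => j with hg'
  have hrange : ∀ (x : Fin n) (_ : x ∉ K),
      Set.range (Sum.elim (e : Fin K.card → Fin n) fun _ : Unit => x) = ↑(insert x K) := by
    intro x hx
    rw [Set.Sum.elim_range, Set.range_const, Finset.coe_insert]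
    rw [show Set.range (e : Fin K.card → Fin n) = ↑K from K.range_orderEmbOfFin rfl]
    rw [Set.union_comm, Set.insert_eq]
  have hinj : ∀ (x : Fin n) (_ : x ∉ K),
      Function.Injective (Sum.elim (e : Fin K.card → Fin n) fun _ : Unit => x) := by
    intro x hx a b hab
    have hmem : ∀ c, (e : Fin K.card → Fin n) c ∈ K := fun c => K.orderEmbOfFin_mem rfl c
    rcases a with a | a <;> rcases b with b | b <;>
      simp only [Sum.elim_inl, Sum.elim_inr] at hab
    · exact congrArg Sum.inl (heinj hab)
    · exact absurd (hab ▸ hmem a) hx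
    · exact absurd (hab.symm ▸ hmem b) hx
    · exact congrArg Sum.inr (Subsingleton.elim a b)
  have hrcard : (insert r K).card = K.card + 1 := Finset.card_insert_of_notMem hr
  obtain ⟨ε, hε, heq⟩ := det_submatrix_range_eq M
    ((insert r K).orderEmbOfFin rfl) ((insert j K).orderEmbOfFin hcard) f' g'
    (((insert r K).orderEmbOfFin rfl).injective) (((insert j K).orderEmbOfFin hcard).injective) (hinj r hr) (hinj j hj)
    (by rw [(insert r K).range_orderEmbOfFin rfl]; exact (hrange r hr).symm)
    (by rw [(insert j K).range_orderEmbOfFin hcard]; exact (hrange j hj).symm)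
  refine ⟨ε, hε, ?_⟩
  have hfm : fminor M (insert r K) (insert j K) hcard =
      (M.submatrix ((insert r K).orderEmbOfFin rfl) ((insert j K).orderEmbOfFin hcard)).det := rfl
  rw [hfm, heq]
  congr 1
  -- now compute det of the block matrix
  haveI : Invertible G := G.invertibleOfIsUnitDet hG
  have hblock : M.submatrix f' g' = Matrix.fromBlocks G
      (Matrix.of fun k (_ : Unit) => M (e k) j)
      (Matrix.of fun (_ : Unit) l => M r (e l))
      (Matrix.of fun (_ : Unit) (_ : Unit) => M r j) := by
    ext a b
    rcases a with a | a <;> rcases b with b | b <;> rfl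
  rw [hblock, Matrix.det_fromBlocks₁₁]
  congr 1
  rw [Matrix.det_unique, Matrix.invOf_eq_nonsing_inv]
  simp only [Matrix.sub_apply, Matrix.of_apply, Matrix.mul_apply, Matrix.mulVec,
    dotProduct, Finset.sum_mul, Finset.mul_sum]
  congr 1
  rw [Finset.sum_comm]
  exact Finset.sum_congr rfl fun k _ => Finset.sum_congr rfl fun l _ => by ring

section Reconstruction
variable {n : ℕ} {S : Type*} [CommRing S]

lemma mem_parents {E : Fin n → Fin n → Prop} [DecidableRel E] {k j : Fin n} :
    k ∈ parents E j ↔ E k j := by simp [parents]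

lemma reconstruction (E : Fin n → Fin n → Prop) [DecidableRel E]
    (hE : ∀ i j, E i j → i < j)
    (M : Matrix (Fin n) (Fin n) S) (hM : ∀ i j, M i j = M j i)
    (hG : ∀ j : Fin n, IsUnit (fminor M (parents E j) (parents E j) rfl))
    (hgen : ∀ i j : Fin n, i < j → ¬ E i j →
      ∀ h : (insert j (parents E j)).card = (insert i (parents E j)).card,
        fminor M (insert i (parents E j)) (insert j (parents E j)) h = 0) :
    ∃ (A : Matrix (Fin n) (Fin n) S) (w : Fin n → S),
      (∀ i j, ¬ E j i → A i j = 0) ∧ M = Sigma' A w := by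
  classical
  set e : ∀ j : Fin n, Fin (parents E j).card ↪o Fin n :=
    fun j => (parents E j).orderEmbOfFin rfl with he
  set Gm : ∀ j : Fin n, Matrix (Fin (parents E j).card) (Fin (parents E j).card) S :=
    fun j => M.submatrix (e j) (e j) with hGm
  have hGu : ∀ j, IsUnit (Gm j).det := fun j => hG j
  set c : ∀ j : Fin n, Fin (parents E j).card → S :=
    fun j => (Gm j)⁻¹ *ᵥ fun l => M (e j l) j with hc
  set A : Matrix (Fin n) (Fin n) S := fun r k =>
    if h : E k r then c r (((parents E r).orderIsoOfFin rfl).symm ⟨k, mem_parents.mpr h⟩)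
    else 0 with hA
  have hsupp : ∀ i j, ¬ E j i → A i j = 0 := by
    intro i j h
    simp only [hA, dif_neg h]
  have hSL : SL A := by
    intro i j h
    apply hsupp
    intro hEji
    exact h (hE j i hEji)
  have hAe : ∀ j l, A j (e j l) = c j l := by
    intro j l
    have hmem : E (e j l) j := mem_parents.mp ((parents E j).orderEmbOfFin_mem rfl l)
    simp only [hA, dif_pos hmem]
    congr 1
    have : (⟨e j l, mem_parents.mpr hmem⟩ : {x // x ∈ parents E j}) =
        (parents E j).orderIsoOfFin rfl l := by
      ext
      rw [Finset.coe_orderIsoOfFin_apply]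
    rw [this, OrderIso.symm_apply_apply]
  have hsum : ∀ (j : Fin n) (F : Fin n → S),
      ∑ k, A j k * F k = ∑ l, c j l * F (e j l) := by
    intro j F
    rw [show ∑ l, c j l * F (e j l) = ∑ l, A j (e j l) * F (e j l) from
      Finset.sum_congr rfl fun l _ => by rw [hAe]]
    rw [sum_orderEmbOfFin (parents E j) rfl (fun y => A j y * F y)]
    symm
    apply Finset.sum_subset (Finset.subset_univ _)
    intro x _ hx
    rw [hsupp j x (fun h => hx (mem_parents.mpr h)), zero_mul]
  have hnormal : ∀ j, Gm j *ᵥ c j = fun l => M (e j l) j := by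
    intro j
    rw [hc, Matrix.mulVec_mulVec, Matrix.mul_nonsing_inv _ (hGu j), Matrix.one_mulVec]
  have step1 : ∀ j r : Fin n, r < j → M r j = ∑ k, A j k * M r k := by
    intro j r hrj
    rw [hsum j (M r)]
    by_cases hmem : r ∈ parents E j
    · set l₀ := ((parents E j).orderIsoOfFin rfl).symm ⟨r, hmem⟩ with hl₀
      have her : e j l₀ = r := by
        rw [hl₀, ← Finset.coe_orderIsoOfFin_apply, OrderIso.apply_symm_apply]
      have := congrFun (hnormal j) l₀
      rw [her] at this
      rw [← this, Matrix.mulVec]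
      rw [dotProduct]
      refine Finset.sum_congr rfl fun l _ => ?_
      show M.submatrix (e j) (e j) l₀ l * c j l = c j l * M r (e j l)
      rw [Matrix.submatrix_apply, her, mul_comm]
    · have hnE : ¬ E r j := fun h => hmem (mem_parents.mpr h)
      have hjK : j ∉ parents E j := fun h => absurd (hE j j (mem_parents.mp h)) (lt_irrefl j)
      have hcard : (insert j (parents E j)).card = (insert r (parents E j)).card := by
        rw [Finset.card_insert_of_notMem hjK, Finset.card_insert_of_notMem hmem]
      obtain ⟨ε, hε, heq⟩ := fminor_bordered M (parents E j) r j hmem hjK hcard (hGu j)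
      rw [hgen r j hrj hnE hcard] at heq
      have h1 := (IsUnit.mul_right_eq_zero hε).mp heq.symm
      have h2 := (IsUnit.mul_right_eq_zero (hGu j)).mp h1
      have h3 := sub_eq_zero.mp h2
      rw [h3]
      exact Finset.sum_congr rfl fun l _ => mul_comm _ _
  -- the matrix N
  set N : Matrix (Fin n) (Fin n) S := (1 - A) * M * (1 - A)ᵀ with hN
  have claim1 : ∀ j c' : Fin n, c' < j → ((1 - A) * M) j c' = 0 := by
    intro j c' hcj
    rw [Matrix.mul_apply]
    have : ∀ r, (1 - A) j r * M r c' = (if j = r then M r c' else 0) - A j r * M r c' := by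
      intro r
      rw [Matrix.sub_apply, Matrix.one_apply, sub_mul]
      split <;> simp
    simp only [this]
    rw [Finset.sum_sub_distrib]
    simp only [Finset.sum_ite_eq, Finset.mem_univ, if_true]
    have := step1 j c' hcj
    rw [show M j c' = M c' j from hM j c', this]
    rw [sub_eq_zero]
    exact Finset.sum_congr rfl fun k _ => by rw [hM k c']
  have claim2 : ∀ j l : Fin n, l < j → N j l = 0 := by
    intro j l hlj
    rw [hN, Matrix.mul_apply]
    refine Finset.sum_eq_zero fun c' _ => ?_
    by_cases hcj : c' < j
    · rw [claim1 j c' hcj, zero_mul]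
    · have h1 : l ≠ c' := by intro h; exact hcj (h ▸ hlj)
      have h2 : A l c' = 0 := hSL l c' (fun h => hcj (lt_trans h hlj))
      rw [Matrix.transpose_apply, Matrix.sub_apply, Matrix.one_apply_ne h1, h2,
        sub_zero, mul_zero]
  have hMT : Mᵀ = M := by ext i j; exact hM j i
  have hNsymm : ∀ j l, N j l = N l j := by
    intro j l
    have : Nᵀ = N := by
      rw [hN, Matrix.transpose_mul, Matrix.transpose_mul, Matrix.transpose_transpose,
        hMT, Matrix.mul_assoc]
    conv_lhs => rw [← this]
    rw [Matrix.transpose_apply]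
  refine ⟨A, fun j => N j j, hsupp, ?_⟩
  have hNd : N = Matrix.diagonal (fun j => N j j) := by
    ext i j
    rcases eq_or_ne i j with rfl | hne
    · rw [Matrix.diagonal_apply_eq]
    · rw [Matrix.diagonal_apply_ne _ hne]
      rcases lt_or_gt_of_ne hne with h | h
      · rw [hNsymm]; exact claim2 j i h
      · exact claim2 i j h
  rw [Sigma', ← hNd, hN]
  rw [show (1 - A) * M * (1 - A)ᵀ = (1 - A) * (M * (1 - A)ᵀ) from Matrix.mul_assoc _ _ _]
  rw [← Matrix.mul_assoc (invL A) (1 - A) _, invL_mul_one_sub hSL, Matrix.one_mul]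
  rw [Matrix.mul_assoc, ← Matrix.transpose_mul, invL_mul_one_sub hSL, Matrix.transpose_one,
    Matrix.mul_one]

end Reconstruction

section MinorLemmas
variable {n : ℕ} {S : Type*} [CommRing S]

lemma map_fminor {T : Type*} [CommRing T] (f : S →+* T) (M : Matrix (Fin n) (Fin n) S)
    (A B : Finset (Fin n)) (h : B.card = A.card) :
    f (fminor M A B h) = fminor (M.map f) A B h := by
  rw [fminor, fminor, RingHom.map_det]
  rfl

lemma fminor_one (A : Finset (Fin n)) : fminor (1 : Matrix (Fin n) (Fin n) S) A A rfl = 1 := by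
  rw [fminor]
  have : (Matrix.of fun k l : Fin A.card =>
      (1 : Matrix (Fin n) (Fin n) S) (A.orderEmbOfFin rfl k) (A.orderEmbOfFin rfl l)) =
      (1 : Matrix (Fin A.card) (Fin A.card) S) := by
    ext k l
    rcases eq_or_ne k l with rfl | hne
    · simp [Matrix.one_apply]
    · rw [Matrix.of_apply, Matrix.one_apply_ne (fun hc => hne ((A.orderEmbOfFin rfl).injective hc)),
        Matrix.one_apply_ne hne]
  rw [this, Matrix.det_one]

/-- the generators vanish on `Sigma' A w` whenever `A` is supported on the edges -/
lemma fminor_Sigma'_eq_zero [IsDomain S] (E : Fin n → Fin n → Prop) [DecidableRel E]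
    (hE : ∀ i j, E i j → i < j) (A : Matrix (Fin n) (Fin n) S)
    (hAsupp : ∀ i j, ¬ E j i → A i j = 0) (w : Fin n → S) {i j : Fin n} (hij : i < j)
    (hnE : ¬ E i j) (h : (insert j (parents E j)).card = (insert i (parents E j)).card) :
    fminor (Sigma' A w) (insert i (parents E j)) (insert j (parents E j)) h = 0 := by
  classical
  have hSL : SL A := fun a b hab => hAsupp a b fun hEba => hab (hE b a hEba)
  set K := parents E j with hK
  have hjK : j ∉ K := fun hm => absurd (hE j j (mem_parents.mp hm)) (lt_irrefl j)
  have hiK : i ∉ K := fun hm => hnE (mem_parents.mp hm)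
  set g := (insert j K).orderEmbOfFin h with hg
  set fr := (insert i K).orderEmbOfFin rfl with hfr
  set v : Fin (insert i K).card → S := fun c => if g c = j then 1 else -(A j (g c)) with hv
  apply det_eq_zero_of_mulVec _ v
  · -- v ≠ 0
    have hjmem : j ∈ insert j K := Finset.mem_insert_self j K
    set c₀ := ((insert j K).orderIsoOfFin h).symm ⟨j, hjmem⟩ with hc₀
    have hgc₀ : g c₀ = j := by
      rw [hg, hc₀, ← Finset.coe_orderIsoOfFin_apply, OrderIso.apply_symm_apply]
    intro hveq
    have := congrFun hveq c₀
    rw [hv] at this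
    simp only [hgc₀, if_pos rfl, Pi.zero_apply] at this
    exact one_ne_zero this
  · funext r0
    set ρ := fr r0 with hρ
    have hρlt : ρ < j := by
      have hmem : ρ ∈ insert i K := by
        rw [hρ, hfr]; exact Finset.orderEmbOfFin_mem _ rfl r0
      rcases Finset.mem_insert.mp hmem with hcase | hcase
      · exact hcase ▸ hij
      · exact hE ρ j (mem_parents.mp (hK ▸ hcase))
    have hterm : ∀ c, (Matrix.of fun k l : Fin (insert i K).card =>
        Sigma' A w (fr k) (g l)) r0 c * v c =
        (fun y => Sigma' A w ρ y * (if y = j then 1 else -(A j y))) (g c) := by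
      intro c
      rfl
    show (∑ c, (Matrix.of fun k l : Fin (insert i K).card =>
        Sigma' A w (fr k) (g l)) r0 c * v c) = 0
    rw [Finset.sum_congr rfl fun c _ => hterm c]
    rw [sum_orderEmbOfFin (insert j K) h (fun y => Sigma' A w ρ y * (if y = j then 1 else -(A j y)))]
    rw [Finset.sum_insert hjK]
    have hKterm : ∀ y ∈ K, Sigma' A w ρ y * (if y = j then 1 else -(A j y)) =
        -(A j y * Sigma' A w ρ y) := by
      intro y hy
      rw [if_neg (fun hyj : y = j => hjK (hyj ▸ hy))]
      ring
    have hrestrict : ∑ y ∈ K, A j y * Sigma' A w ρ y = ∑ y, A j y * Sigma' A w ρ y := by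
      apply Finset.sum_subset (Finset.subset_univ _)
      intro x _ hx
      rw [hAsupp j x (fun hEx => hx (hK ▸ mem_parents.mpr hEx)), zero_mul]
    have hfin : Sigma' A w ρ j = ∑ y ∈ K, A j y * Sigma' A w ρ y := by
      rw [hrestrict]; exact Sigma'_rel hSL w hρlt
    rw [Finset.sum_congr rfl hKterm]
    simp [hfin]

end MinorLemmas

section Parametrization
variable {n : ℕ}

/-- the parameter polynomial ring index -/
abbrev PIdx (n : ℕ) := (Fin n × Fin n) ⊕ Fin n

variable (E : Fin n → Fin n → Prop) [DecidableRel E]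

/-- generic edge-coefficient matrix -/
def aGen : Matrix (Fin n) (Fin n) (MvPolynomial (PIdx n) ℂ) :=
  fun i j => if E j i then X (Sum.inl (i, j)) else 0

/-- generic variances -/
def wGen : Fin n → MvPolynomial (PIdx n) ℂ := fun j => X (Sum.inr j)

lemma aGen_supp : ∀ i j, ¬ E j i → aGen E i j = 0 := fun i j h => if_neg h

/-- the parametrized covariance entries, as a function on unordered pairs -/
def sigmaSym : Sym2 (Fin n) → MvPolynomial (PIdx n) ℂ :=
  Sym2.lift ⟨fun i j => Sigma' (aGen E) (wGen) i j, fun i j => Sigma'_symm _ _ i j⟩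

/-- the ring homomorphism dual to the parametrization map -/
def piHom : MvPolynomial (Sym2 (Fin n)) ℂ →+* MvPolynomial (PIdx n) ℂ :=
  (aeval (sigmaSym E)).toRingHom

lemma piHom_X (i j : Fin n) :
    piHom E (X (Sym2.mk i j)) = Sigma' (aGen E) wGen i j := by
  rw [piHom]
  show (aeval (sigmaSym E)) (X (Sym2.mk i j)) = _
  rw [aeval_X, sigmaSym, Sym2.lift_mk]

lemma map_genMat : (genMat n).map (piHom E) = Sigma' (aGen E) wGen :=
  Matrix.ext fun i j => piHom_X E i j

lemma piHom_fminor (A B : Finset (Fin n)) (h : B.card = A.card) :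
    piHom E (fminor (genMat n) A B h) = fminor (Sigma' (aGen E) wGen) A B h := by
  rw [map_fminor, map_genMat]

lemma piHom_gen_eq_zero (hE : ∀ i j : Fin n, E i j → i < j) {i j : Fin n} (hij : i < j) (hnE : ¬ E i j)
    (h : (insert j (parents E j)).card = (insert i (parents E j)).card) :
    piHom E (fminor (genMat n) (insert i (parents E j)) (insert j (parents E j)) h) = 0 := by
  rw [piHom_fminor]
  exact fminor_Sigma'_eq_zero E hE (aGen E) (aGen_supp E) wGen hij hnE h

lemma impIdeal_le_ker (hE : ∀ i j : Fin n, E i j → i < j) : impIdeal E ≤ RingHom.ker (piHom E) := by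
  rw [impIdeal, Ideal.span_le]
  rintro g ⟨i, j, hij, hnE, hcard, rfl⟩
  exact piHom_gen_eq_zero E hE hij hnE hcard

/-- evaluation point with zero coefficients and unit variances -/
def pt0 : PIdx n → ℂ := Sum.elim (fun _ => 0) (fun _ => 1)

lemma eval_pt0_Sigma' :
    (Sigma' (aGen E) wGen).map (eval (pt0 : PIdx n → ℂ)) = 1 := by
  rw [map_Sigma' (eval (pt0 : PIdx n → ℂ))]
  have ha : (aGen E).map (eval (pt0 : PIdx n → ℂ)) = 0 := by
    ext i j
    rw [Matrix.map_apply, aGen]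
    split <;> simp [pt0]
  have hw : (fun i => eval (pt0 : PIdx n → ℂ) (wGen i)) = fun _ => (1 : ℂ) := by
    funext i
    simp [wGen, pt0]
  rw [ha, hw]
  have hSL0 : SL (0 : Matrix (Fin n) (Fin n) ℂ) := fun _ _ _ => rfl
  have hinv : invL (0 : Matrix (Fin n) (Fin n) ℂ) = 1 := by
    have := one_sub_mul_invL hSL0
    rwa [sub_zero, Matrix.one_mul] at this
  rw [Sigma', hinv, Matrix.diagonal_one, Matrix.one_mul, Matrix.transpose_one, Matrix.one_mul]

lemma piHom_fminor_ne_zero (A : Finset (Fin n)) :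
    piHom E (fminor (genMat n) A A rfl) ≠ 0 := by
  intro hzero
  have := congrArg (eval (pt0 : PIdx n → ℂ)) hzero
  rw [piHom_fminor, map_fminor (eval (pt0 : PIdx n → ℂ)), eval_pt0_Sigma', fminor_one] at this
  simp at this

lemma piHom_theta0_ne_zero : piHom E (theta0 n) ≠ 0 := by
  rw [theta0, map_prod]
  rw [Finset.prod_ne_zero_iff]
  exact fun A _ => piHom_fminor_ne_zero E A

/-- evaluation compatibility -/
lemma eval_piHom (pt : PIdx n → ℂ) (f : MvPolynomial (Sym2 (Fin n)) ℂ) :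
    eval pt (piHom E f) = eval (fun s => eval pt (sigmaSym E s)) f := by
  have : (eval pt).comp (piHom E) = (eval (fun s => eval pt (sigmaSym E s)) :
      MvPolynomial (Sym2 (Fin n)) ℂ →+* ℂ) := by
    apply MvPolynomial.ringHom_ext
    · intro r
      simp [piHom]
    · intro s
      simp only [RingHom.comp_apply, eval_X]
      rw [piHom]
      show eval pt ((aeval (sigmaSym E)) (X s)) = _
      rw [aeval_X]
  exact congrFun (congrArg DFunLike.coe this) f

lemma eval_sigmaSym (pt : PIdx n → ℂ) (i j : Fin n) :
    eval pt (sigmaSym E (Sym2.mk i j)) =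
      Sigma' (fun a b => if E b a then pt (Sum.inl (a, b)) else 0) (fun k => pt (Sum.inr k)) i j := by
  rw [sigmaSym, Sym2.lift_mk]
  have := congrFun (congrFun (map_Sigma' (eval pt) (aGen E) wGen) i) j
  rw [Matrix.map_apply] at this
  rw [this]
  congr 1
  · ext a b
    rw [Matrix.map_apply, aGen]
    split <;> simp
  · funext k
    simp [wGen]
end Parametrization

section Reverse
variable {n : ℕ} (E : Fin n → Fin n → Prop) [DecidableRel E]

abbrev QL := Localization.Away (Ideal.Quotient.mk (impIdeal E) (theta0 n))

def iotaHom : MvPolynomial (Sym2 (Fin n)) ℂ →+* QL E :=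
  (algebraMap _ _).comp (Ideal.Quotient.mk (impIdeal E))

lemma iotaHom_theta0_isUnit : IsUnit (iotaHom E (theta0 n)) :=
  IsLocalization.Away.algebraMap_isUnit (S := QL E)
    (Ideal.Quotient.mk (impIdeal E) (theta0 n))

lemma iotaHom_ker (g : MvPolynomial (Sym2 (Fin n)) ℂ) (hg : g ∈ impIdeal E) :
    iotaHom E g = 0 := by
  show (algebraMap (MvPolynomial (Sym2 (Fin n)) ℂ ⧸ impIdeal E) (QL E))
    ((Ideal.Quotient.mk (impIdeal E)) g) = 0
  rw [Ideal.Quotient.eq_zero_iff_mem.mpr hg, map_zero]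

lemma exists_pow_of_iotaHom_eq_zero (f : MvPolynomial (Sym2 (Fin n)) ℂ)
    (h : iotaHom E f = 0) : ∃ m, theta0 n ^ m * f ∈ impIdeal E := by
  have h' : algebraMap _ (QL E) (Ideal.Quotient.mk (impIdeal E) f) = 0 := h
  obtain ⟨⟨mel, k, hk⟩, hm⟩ := (IsLocalization.map_eq_zero_iff
    (Submonoid.powers (Ideal.Quotient.mk (impIdeal E) (theta0 n))) (QL E) _).mp h'
  refine ⟨k, ?_⟩
  rw [← Ideal.Quotient.eq_zero_iff_mem, _root_.map_mul, map_pow]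
  have hm' : mel * Ideal.Quotient.mk (impIdeal E) f = 0 := hm
  rw [← hk] at hm'
  exact hm'
end Reverse

/-- Theorem 1(a),(b) and Proposition 2 of the paper: `p_G` is the vanishing ideal of the image
of the parametrization `f_G : (A, ω) ↦ (1 − A)⁻¹ Ω² (1 − A)⁻ᵀ` with `A` supported on the
edges of `G`. -/
theorem mem_satPG_iff_vanishing {n : ℕ} (hn : 1 ≤ n)
    (E : Fin n → Fin n → Prop) [DecidableRel E] (hE : ∀ i j, E i j → i < j)
    (f : MvPolynomial (Sym2 (Fin n)) ℂ) :
    f ∈ satPG E ↔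
      ∀ (A : Matrix (Fin n) (Fin n) ℂ) (ω : Fin n → ℂ) (x : Sym2 (Fin n) → ℂ),
        (∀ i j, ¬ E j i → A i j = 0) →
        (∀ i j, x (Sym2.mk i j) =
          (((1 - A)⁻¹ * Matrix.diagonal (fun i => ω i ^ 2) * ((1 - A)⁻¹)ᵀ :
            Matrix (Fin n) (Fin n) ℂ)) i j) →
        MvPolynomial.eval x f = 0 := by
  classical
  constructor
  · rintro ⟨m, hm⟩ A ω x hsupp hx
    have hSL : SL A := fun i j h => hsupp i j fun hEji => h (hE j i hEji)
    have hker : piHom E (theta0 n ^ m * f) = 0 :=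
      RingHom.mem_ker.mp (impIdeal_le_ker E hE hm)
    rw [_root_.map_mul, map_pow] at hker
    have hπf : piHom E f = 0 := by
      rcases mul_eq_zero.mp hker with h | h
      · exact absurd h (pow_ne_zero m (piHom_theta0_ne_zero E))
      · exact h
    set pt : PIdx n → ℂ := Sum.elim (fun p => A p.1 p.2) (fun j => ω j ^ 2) with hpt
    have hxpt : (fun s => eval pt (sigmaSym E s)) = x := by
      funext s
      induction s using Sym2.ind with
      | _ i j =>
        rw [eval_sigmaSym, hx i j]
        have hA' : (fun a b => if E b a then pt (Sum.inl (a, b)) else 0) = A := by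
          funext a b
          by_cases h : E b a
          · simp [hpt, h]
          · simp [hpt, h, hsupp a b h]
        have hw' : (fun k => pt (Sum.inr k)) = fun k => ω k ^ 2 := rfl
        rw [hA', hw', Matrix.inv_eq_right_inv (one_sub_mul_invL hSL)]
        rfl
    rw [← hxpt, ← eval_piHom, hπf, map_zero]
  · intro hv
    have hπf : piHom E f = 0 := by
      apply MvPolynomial.funext (q := 0)
      intro pt
      rw [map_zero]
      set A : Matrix (Fin n) (Fin n) ℂ :=
        (fun a b => if E b a then pt (Sum.inl (a, b)) else 0) with hA
      have hsupp : ∀ i j, ¬ E j i → A i j = 0 := fun i j h => if_neg h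
      have hSL : SL A := fun i j h => hsupp i j fun hEji => h (hE j i hEji)
      choose ω hω using fun j =>
        IsAlgClosed.exists_pow_nat_eq (k := ℂ) (pt (Sum.inr j)) (n := 2) (by norm_num)
      set x : Sym2 (Fin n) → ℂ := fun s => eval pt (sigmaSym E s) with hxdef
      have hx : ∀ i j, x (Sym2.mk i j) =
          (((1 - A)⁻¹ * Matrix.diagonal (fun i => ω i ^ 2) * ((1 - A)⁻¹)ᵀ :
            Matrix (Fin n) (Fin n) ℂ)) i j := by
        intro i j
        rw [hxdef]
        show eval pt (sigmaSym E (Sym2.mk i j)) = _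
        rw [eval_sigmaSym, Matrix.inv_eq_right_inv (one_sub_mul_invL hSL)]
        have hw' : (fun k => pt (Sum.inr k)) = fun k => ω k ^ 2 := by
          funext k
          rw [hω k]
        rw [hw']
        rfl
      have h0 := hv A ω x hsupp hx
      rw [eval_piHom]
      exact h0
    -- the reverse reconstruction over the localization
    set MQ : Matrix (Fin n) (Fin n) (QL E) := (genMat n).map (iotaHom E) with hMQdef
    have hMsym : ∀ i j, MQ i j = MQ j i := by
      intro i j
      show iotaHom E (X (Sym2.mk i j)) = iotaHom E (X (Sym2.mk j i))
      rw [Sym2.eq_swap]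
    have hGu : ∀ j, IsUnit (fminor MQ (parents E j) (parents E j) rfl) := by
      intro j
      rw [hMQdef, ← map_fminor (iotaHom E)]
      have hθ := iotaHom_theta0_isUnit E
      have hsplit : theta0 n = fminor (genMat n) (parents E j) (parents E j) rfl *
          ∏ B ∈ Finset.univ.erase (parents E j), fminor (genMat n) B B rfl :=
        (Finset.mul_prod_erase _ _ (Finset.mem_univ _)).symm
      have hθ2 : IsUnit (iotaHom E (fminor (genMat n) (parents E j) (parents E j) rfl *
          ∏ B ∈ Finset.univ.erase (parents E j), fminor (genMat n) B B rfl)) := by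
        rw [← hsplit]; exact hθ
      rw [_root_.map_mul] at hθ2
      exact isUnit_of_mul_isUnit_left hθ2
    have hgen : ∀ i j : Fin n, i < j → ¬ E i j →
        ∀ h : (insert j (parents E j)).card = (insert i (parents E j)).card,
          fminor MQ (insert i (parents E j)) (insert j (parents E j)) h = 0 := by
      intro i j hij hnE h
      rw [hMQdef, ← map_fminor (iotaHom E)]
      exact iotaHom_ker E _ (Ideal.subset_span ⟨i, j, hij, hnE, h, rfl⟩)
    obtain ⟨Ahat, what, hAsupp, hMQeq⟩ := reconstruction E hE MQ hMsym hGu hgen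
    set ρ : MvPolynomial (PIdx n) ℂ →+* QL E :=
      eval₂Hom ((iotaHom E).comp MvPolynomial.C)
        (Sum.elim (fun p => Ahat p.1 p.2) what) with hρdef
    have hcomp : ρ.comp (piHom E) = iotaHom E := by
      apply MvPolynomial.ringHom_ext
      · intro r
        show ρ ((aeval (sigmaSym E)) (C r)) = iotaHom E (C r)
        rw [aeval_C, MvPolynomial.algebraMap_eq, hρdef, eval₂Hom_C]
        rfl
      · intro s
        induction s using Sym2.ind with
        | _ i j =>
          rw [RingHom.comp_apply, piHom_X]
          have hmap := congrFun (congrFun (map_Sigma' ρ (aGen E) wGen) i) j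
          rw [Matrix.map_apply] at hmap
          rw [hmap]
          have ha : (aGen E).map ρ = Ahat := by
            refine Matrix.ext fun a b => ?_
            rw [Matrix.map_apply, aGen]
            by_cases h : E b a
            · rw [if_pos h, hρdef, eval₂Hom_X']
              rfl
            · rw [if_neg h, map_zero, (hAsupp a b h)]
          have hw : (fun i => ρ (wGen i)) = what := by
            funext i
            rw [wGen, hρdef, eval₂Hom_X']
            rfl
          rw [ha, hw, ← hMQeq]
          rfl
    have hι : iotaHom E f = 0 := by
      rw [← hcomp, RingHom.comp_apply, hπf, map_zero]
    obtain ⟨m, hmem⟩ := exists_pow_of_iotaHom_eq_zero E f hι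
    exact ⟨m, hmem⟩
end
end
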